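/- arXiv:1603.06228 — 4 statements merged into one kernel-verified Lean document; each statement's English description precedes it below -/
import Mathlib

section
/- Let f be nilpotent on V with exponent decomposition V = ⟨U_{a_1}⟩ ⊕ ⋯ ⊕ ⟨U_{a_m}⟩, and let X be a characteristic subspace. If x ∈ X decomposes as x = x_1 + ⋯ + x_m with x_i ∈ ⟨U_{a_i}⟩, and if the number of generators |U_{a_s}| > 1 for some s, then x_s ∈ X. -/
open LinearMap

variable {K : Type*} [Field K] {V : Type*} [AddCommGroup V] [Module K V]

/-- `X` is hyperinvariant for `f`: invariant under every endomorphism commuting with `f`. -/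
def Hinv (f : V →ₗ[K] V) (X : Submodule K V) : Prop :=
  ∀ g : V →ₗ[K] V, g ∘ₗ f = f ∘ₗ g → X.map g ≤ X

/-- `X` is characteristic for `f`: `f`-invariant and fixed by every automorphism commuting with `f`. -/
def Chinv (f : V →ₗ[K] V) (X : Submodule K V) : Prop :=
  X.map f ≤ X ∧
    ∀ α : V ≃ₗ[K] V, (α : V →ₗ[K] V) ∘ₗ f = f ∘ₗ (α : V →ₗ[K] V) →
      X.map (α : V →ₗ[K] V) = X

/-- The cyclic subspace generated by `x`. -/
def cyc (f : V →ₗ[K] V) (x : V) : Submodule K V :=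
  Submodule.span K (Set.range fun i : ℕ => (f ^ i) x)

/-- `x` has exponent `ℓ`. -/
def ExpEq (f : V →ₗ[K] V) (x : V) (ℓ : ℕ) : Prop :=
  (f ^ ℓ) x = 0 ∧ ∀ j < ℓ, (f ^ j) x ≠ 0

/-- `x` has height `q`. -/
def HeightEq (f : V →ₗ[K] V) (x : V) (q : ℕ) : Prop :=
  x ∈ LinearMap.range (f ^ q) ∧ x ∉ LinearMap.range (f ^ (q + 1))

/-- The `r`-th Ulm invariant: number of Jordan blocks of size `r` (for `r ≥ 1`). -/
noncomputable def ulm (f : V →ₗ[K] V) (r : ℕ) : ℕ :=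
  Module.finrank K ↥(LinearMap.ker f ⊓ LinearMap.range (f ^ (r - 1))) -
    Module.finrank K ↥(LinearMap.ker f ⊓ LinearMap.range (f ^ r))

/-- `u` is a generator tuple with exponents `t`. -/
def IsGenTuple {k : ℕ} (f : V →ₗ[K] V) (u : Fin k → V) (t : Fin k → ℕ) : Prop :=
  (∀ i, ExpEq f (u i) (t i)) ∧ DirectSum.IsInternal (fun i => cyc f (u i))

/-- The summand `⟨U_a⟩` of all cyclic subspaces whose generator has exponent `a`. -/
def subU {k : ℕ} (f : V →ₗ[K] V) (u : Fin k → V) (t : Fin k → ℕ) (a : ℕ) : Submodule K V :=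
  ⨆ i ∈ {i : Fin k | t i = a}, cyc f (u i)

open Polynomial

noncomputable def psiMap (f : V →ₗ[K] V) (w : V) : K[X] →ₗ[K] V where
  toFun p := Polynomial.aeval f p w
  map_add' p q := by simp
  map_smul' c p := by simp

lemma psiMap_apply (f : V →ₗ[K] V) (w : V) (p : K[X]) :
    psiMap f w p = Polynomial.aeval f p w := rfl

lemma cyc_eq_range (f : V →ₗ[K] V) (w : V) : cyc f w = LinearMap.range (psiMap f w) := by
  apply le_antisymm
  · rw [cyc, Submodule.span_le]
    rintro _ ⟨n, rfl⟩
    exact ⟨X ^ n, by simp [psiMap_apply]⟩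
  · rintro _ ⟨p, rfl⟩
    rw [psiMap_apply]
    induction p using Polynomial.induction_on' with
    | add p q hp hq => rw [map_add, LinearMap.add_apply]; exact Submodule.add_mem _ hp hq
    | monomial n c =>
        rw [Polynomial.aeval_monomial]
        have : ((algebraMap K (V →ₗ[K] V)) c * f ^ n) w = c • ((f ^ n) w) := by
          simp [Module.algebraMap_end_eq_smul_id, Module.End.mul_apply]
        rw [this]
        exact Submodule.smul_mem _ _ (Submodule.subset_span ⟨n, rfl⟩)

lemma psiMap_zero_iff {f : V →ₗ[K] V} {w : V} {s : ℕ} (hw : ExpEq f w s) (p : K[X]) :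
    psiMap f w p = 0 ↔ (X : K[X]) ^ s ∣ p := by
  constructor
  · intro h
    rw [X_pow_dvd_iff]
    intro n hn
    induction n using Nat.strong_induction_on with
    | _ n IH =>
    have hn' : n < s := hn
    by_cases hdeg : p.natDegree < n
    · exact Polynomial.coeff_eq_zero_of_natDegree_lt hdeg
    push_neg at hdeg
    have hsum : psiMap f w p = ∑ m ∈ Finset.range (p.natDegree + 1), p.coeff m • (f ^ m) w := by
      rw [psiMap_apply, Polynomial.aeval_eq_sum_range]
      simp [LinearMap.sum_apply]
    have h2 : (f ^ (s - 1 - n)) (psiMap f w p) = 0 := by rw [h, map_zero]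
    rw [hsum, map_sum] at h2
    have h3 : ∀ m ∈ Finset.range (p.natDegree + 1), m ≠ n →
        (f ^ (s - 1 - n)) (p.coeff m • (f ^ m) w) = 0 := by
      intro m _ hmn
      rcases lt_or_gt_of_ne hmn with hlt | hgt
      · rw [IH m hlt (lt_trans hlt hn'), zero_smul, map_zero]
      · have : (f ^ (s - 1 - n)) ((f ^ m) w) = 0 := by
          rw [← Module.End.mul_apply, ← pow_add]
          have : s - 1 - n + m = (s - 1 - n + m - s) + s := by omega
          rw [this, pow_add, Module.End.mul_apply, hw.1, map_zero]
        rw [map_smul, this, smul_zero]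
    rw [Finset.sum_eq_single_of_mem n (Finset.mem_range.2 (by omega)) h3] at h2
    rw [map_smul, ← Module.End.mul_apply, ← pow_add] at h2
    have he : s - 1 - n + n = s - 1 := by omega
    rw [he] at h2
    rcases smul_eq_zero.1 h2 with hc | hz
    · exact hc
    · exact absurd hz (hw.2 (s - 1) (by omega))
  · rintro ⟨q, rfl⟩
    rw [psiMap_apply, mul_comm, map_mul, Module.End.mul_apply, Polynomial.aeval_X_pow, hw.1]
    exact map_zero _

lemma mem_cyc_f {f : V →ₗ[K] V} {w v : V} (hv : v ∈ cyc f w) : f v ∈ cyc f w := by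
  rw [cyc_eq_range] at hv ⊢
  obtain ⟨p, rfl⟩ := hv
  exact ⟨X * p, by rw [psiMap_apply, psiMap_apply, map_mul, Module.End.mul_apply, Polynomial.aeval_X]⟩

section proj
variable {k : ℕ} (f : V →ₗ[K] V) (u : Fin k → V)

noncomputable def eIso (h2 : DirectSum.IsInternal (fun l => cyc f (u l))) :
    DirectSum (Fin k) (fun l => cyc f (u l)) ≃ₗ[K] V :=
  LinearEquiv.ofBijective (DirectSum.coeLinearMap _) h2

noncomputable def Pl (h2 : DirectSum.IsInternal (fun l => cyc f (u l))) (l : Fin k) :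
    V →ₗ[K] V :=
  (cyc f (u l)).subtype ∘ₗ
    (DirectSum.component K (Fin k) (fun l => cyc f (u l)) l) ∘ₗ
      (eIso f u h2).symm.toLinearMap

lemma Pl_apply_mem (h2 : DirectSum.IsInternal (fun l => cyc f (u l))) {l : Fin k} {v : V}
    (hv : v ∈ cyc f (u l)) : Pl f u h2 l v = v := by
  have := h2.ofBijective_coeLinearMap_of_mem (i := l) hv
  simp only [Pl, LinearMap.comp_apply, LinearEquiv.coe_toLinearMap, Submodule.coe_subtype]
  rw [← DirectSum.apply_eq_component]
  simp only [eIso]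
  rw [this]

lemma Pl_apply_mem_ne (h2 : DirectSum.IsInternal (fun l => cyc f (u l))) {l m : Fin k} {v : V}
    (hml : m ≠ l) (hv : v ∈ cyc f (u m)) : Pl f u h2 l v = 0 := by
  have := h2.ofBijective_coeLinearMap_of_mem_ne (i := m) (j := l) hml hv
  simp only [Pl, LinearMap.comp_apply, LinearEquiv.coe_toLinearMap, Submodule.coe_subtype]
  rw [← DirectSum.apply_eq_component]
  simp only [eIso]
  rw [this, Submodule.coe_zero]

lemma sum_Pl (h2 : DirectSum.IsInternal (fun l => cyc f (u l))) (v : V) :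
    ∑ l, Pl f u h2 l v = v := by
  classical
  have happ : ∀ d, eIso f u h2 d = DirectSum.coeLinearMap (fun l => cyc f (u l)) d :=
    fun d => rfl
  have hv : v = DirectSum.coeLinearMap (fun l => cyc f (u l)) ((eIso f u h2).symm v) := by
    rw [← happ, (eIso f u h2).apply_symm_apply]
  conv_rhs => rw [hv]
  rw [← DirectSum.sum_univ_of (x := (eIso f u h2).symm v), map_sum]
  apply Finset.sum_congr rfl
  intro l _
  simp only [Pl, LinearMap.comp_apply, LinearEquiv.coe_toLinearMap, Submodule.coe_subtype,
    DirectSum.coeLinearMap_of]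
  rfl

lemma ext_on_cyc (h2 : DirectSum.IsInternal (fun l => cyc f (u l))) {g g' : V →ₗ[K] V}
    (h : ∀ m : Fin k, ∀ v ∈ cyc f (u m), g v = g' v) : g = g' := by
  ext v
  have hv : v ∈ ⨆ m, cyc f (u m) := by
    rw [h2.submodule_iSup_eq_top]; trivial
  refine Submodule.iSup_induction (x := v) _ hv (fun m x hx => h m x hx) (by simp) ?_
  intro x y hx hy
  rw [map_add, map_add, hx, hy]

end proj

lemma psiMap_mul_X (f : V →ₗ[K] V) (w : V) (p : K[X]) :
    psiMap f w (X * p) = f (psiMap f w p) := by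
  rw [psiMap_apply, psiMap_apply, map_mul, Module.End.mul_apply, Polynomial.aeval_X]

lemma ker_psi_eq {f : V →ₗ[K] V} {w w' : V} {s : ℕ} (hw : ExpEq f w s) (hw' : ExpEq f w' s) :
    LinearMap.ker (psiMap f w) = LinearMap.ker (psiMap f w') := by
  ext p
  rw [LinearMap.mem_ker, LinearMap.mem_ker, psiMap_zero_iff hw, psiMap_zero_iff hw']

section phi
variable {k : ℕ} (f : V →ₗ[K] V) (u : Fin k → V)

noncomputable def phiMap (h2 : DirectSum.IsInternal (fun l => cyc f (u l))) (i j : Fin k)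
    (hker : LinearMap.ker (psiMap f (u i)) = LinearMap.ker (psiMap f (u j))) : V →ₗ[K] V :=
  (Submodule.liftQ (LinearMap.ker (psiMap f (u i))) (psiMap f (u j)) (le_of_eq hker)) ∘ₗ
    ((psiMap f (u i)).quotKerEquivRange).symm.toLinearMap ∘ₗ
      (LinearEquiv.ofEq _ _ (cyc_eq_range f (u i))).toLinearMap ∘ₗ
        (DirectSum.component K (Fin k) (fun l => cyc f (u l)) i) ∘ₗ
          (eIso f u h2).symm.toLinearMap

variable (h2 : DirectSum.IsInternal (fun l => cyc f (u l))) (i j : Fin k)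
  (hker : LinearMap.ker (psiMap f (u i)) = LinearMap.ker (psiMap f (u j)))

lemma phiMap_apply_psi (p : K[X]) :
    phiMap f u h2 i j hker (psiMap f (u i) p) = psiMap f (u j) p := by
  have hv : psiMap f (u i) p ∈ cyc f (u i) := by rw [cyc_eq_range]; exact ⟨p, rfl⟩
  simp only [phiMap, LinearMap.comp_apply, LinearEquiv.coe_toLinearMap]
  rw [← DirectSum.apply_eq_component]
  simp only [eIso]
  rw [h2.ofBijective_coeLinearMap_of_mem hv]
  have h1 : (LinearEquiv.ofEq _ _ (cyc_eq_range f (u i))) ⟨psiMap f (u i) p, hv⟩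
      = ⟨psiMap f (u i) p, LinearMap.mem_range_self _ p⟩ := rfl
  rw [h1]
  have h2' : ((psiMap f (u i)).quotKerEquivRange).symm
        ⟨psiMap f (u i) p, LinearMap.mem_range_self _ p⟩
      = Submodule.Quotient.mk p := by
    rw [LinearEquiv.symm_apply_eq]
    exact Subtype.ext ((psiMap f (u i)).quotKerEquivRange_apply_mk p).symm
  rw [h2', Submodule.liftQ_apply]

lemma phiMap_apply_ne {m : Fin k} {v : V} (hmi : m ≠ i) (hv : v ∈ cyc f (u m)) :
    phiMap f u h2 i j hker v = 0 := by
  simp only [phiMap, LinearMap.comp_apply, LinearEquiv.coe_toLinearMap]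
  rw [← DirectSum.apply_eq_component]
  simp only [eIso]
  rw [h2.ofBijective_coeLinearMap_of_mem_ne hmi hv]
  simp

lemma phiMap_mem (v : V) : phiMap f u h2 i j hker v ∈ cyc f (u j) := by
  rw [cyc_eq_range]
  simp only [phiMap, LinearMap.comp_apply, LinearEquiv.coe_toLinearMap]
  have key : ∀ q : K[X] ⧸ LinearMap.ker (psiMap f (u i)),
      (Submodule.liftQ (LinearMap.ker (psiMap f (u i))) (psiMap f (u j)) (le_of_eq hker)) q
        ∈ LinearMap.range (psiMap f (u j)) := by
    intro q
    obtain ⟨p, rfl⟩ := Submodule.Quotient.mk_surjective _ q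
    rw [Submodule.liftQ_apply]
    exact LinearMap.mem_range_self _ p
  exact key _

lemma phiMap_comm : phiMap f u h2 i j hker ∘ₗ f = f ∘ₗ phiMap f u h2 i j hker := by
  apply ext_on_cyc f u h2
  intro m v hv
  simp only [LinearMap.comp_apply]
  by_cases hmi : m = i
  · subst hmi
    rw [cyc_eq_range] at hv
    obtain ⟨p, rfl⟩ := hv
    rw [← psiMap_mul_X, phiMap_apply_psi, phiMap_apply_psi, psiMap_mul_X]
  · rw [phiMap_apply_ne f u h2 i j hker hmi hv,
      phiMap_apply_ne f u h2 i j hker hmi (mem_cyc_f hv), map_zero]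

lemma phiMap_phi (hij : i ≠ j) (v : V) :
    phiMap f u h2 i j hker (phiMap f u h2 i j hker v) = 0 :=
  phiMap_apply_ne f u h2 i j hker (Ne.symm hij) (phiMap_mem f u h2 i j hker v)

noncomputable def alphaE (hij : i ≠ j) : V ≃ₗ[K] V :=
  LinearEquiv.ofLinear (LinearMap.id + phiMap f u h2 i j hker)
    (LinearMap.id - phiMap f u h2 i j hker)
    (by
      ext v
      simp only [LinearMap.comp_apply, LinearMap.add_apply, LinearMap.sub_apply,
        LinearMap.id_apply, map_sub, phiMap_phi f u h2 i j hker hij]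
      abel)
    (by
      ext v
      simp only [LinearMap.comp_apply, LinearMap.add_apply, LinearMap.sub_apply,
        LinearMap.id_apply, map_add, phiMap_phi f u h2 i j hker hij]
      abel)

lemma alphaE_coe (hij : i ≠ j) :
    (alphaE f u h2 i j hker hij : V →ₗ[K] V) = LinearMap.id + phiMap f u h2 i j hker := rfl

lemma alphaE_comm (hij : i ≠ j) :
    (alphaE f u h2 i j hker hij : V →ₗ[K] V) ∘ₗ f
      = f ∘ₗ (alphaE f u h2 i j hker hij : V →ₗ[K] V) := by
  rw [alphaE_coe, LinearMap.add_comp, LinearMap.comp_add, LinearMap.id_comp, LinearMap.comp_id,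
    phiMap_comm]

end phi

section main
variable {k : ℕ} (f : V →ₗ[K] V) (u : Fin k → V)

lemma Pl_mem (h2 : DirectSum.IsInternal (fun l => cyc f (u l))) (l : Fin k) (v : V) :
    Pl f u h2 l v ∈ cyc f (u l) := by
  simp only [Pl, LinearMap.comp_apply, Submodule.coe_subtype]
  exact SetLike.coe_mem _

lemma alphaE_apply (h2 : DirectSum.IsInternal (fun l => cyc f (u l))) (i j : Fin k)
    (hker : LinearMap.ker (psiMap f (u i)) = LinearMap.ker (psiMap f (u j)))
    (hij : i ≠ j) (v : V) :
    alphaE f u h2 i j hker hij v = v + phiMap f u h2 i j hker v := rfl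

lemma chinv_mem {X : Submodule K V} (hX : Chinv f X) {α : V ≃ₗ[K] V}
    (hc : (α : V →ₗ[K] V) ∘ₗ f = f ∘ₗ (α : V →ₗ[K] V)) {v : V} (hv : v ∈ X) : α v ∈ X := by
  rw [← hX.2 α hc]
  exact Submodule.mem_map_of_mem hv

lemma comp_mem (t : Fin k → ℕ) (hu : IsGenTuple f u t) (X : Submodule K V) (hX : Chinv f X)
    {s : ℕ} {i j : Fin k} (hij : i ≠ j) (hti : t i = s) (htj : t j = s)
    {x : V} (hx : x ∈ X) : Pl f u hu.2 i x ∈ X := by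
  have hei : ExpEq f (u i) s := hti ▸ hu.1 i
  have hej : ExpEq f (u j) s := htj ▸ hu.1 j
  have hker : LinearMap.ker (psiMap f (u i)) = LinearMap.ker (psiMap f (u j)) :=
    ker_psi_eq hei hej
  have hker' : LinearMap.ker (psiMap f (u j)) = LinearMap.ker (psiMap f (u i)) := hker.symm
  -- φ x ∈ X
  have hαx : alphaE f u hu.2 i j hker hij x ∈ X :=
    chinv_mem f hX (alphaE_comm f u hu.2 i j hker hij) hx
  rw [alphaE_apply] at hαx
  have hφx : phiMap f u hu.2 i j hker x ∈ X := by
    have := X.sub_mem hαx hx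
    simpa using this
  -- identify φ x
  obtain ⟨p, hp⟩ : ∃ p, psiMap f (u i) p = Pl f u hu.2 i x := by
    have h := Pl_mem f u hu.2 i x
    rw [cyc_eq_range] at h
    exact h
  have hφeq : phiMap f u hu.2 i j hker x = psiMap f (u j) p := by
    have hsum : x = ∑ l, Pl f u hu.2 l x := (sum_Pl f u hu.2 x).symm
    calc phiMap f u hu.2 i j hker x
        = ∑ l, phiMap f u hu.2 i j hker (Pl f u hu.2 l x) := by
          conv_lhs => rw [hsum]
          rw [map_sum]
      _ = phiMap f u hu.2 i j hker (Pl f u hu.2 i x) := by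
          refine Finset.sum_eq_single_of_mem i (Finset.mem_univ i) ?_
          intro m _ hmi
          exact phiMap_apply_ne f u hu.2 i j hker hmi (Pl_mem f u hu.2 m x)
      _ = psiMap f (u j) p := by rw [← hp, phiMap_apply_psi]
  have hz : psiMap f (u j) p ∈ X := hφeq ▸ hφx
  -- apply the reverse automorphism
  have hαz : alphaE f u hu.2 j i hker' (Ne.symm hij) (psiMap f (u j) p) ∈ X :=
    chinv_mem f hX (alphaE_comm f u hu.2 j i hker' (Ne.symm hij)) hz
  rw [alphaE_apply] at hαz
  have hback : phiMap f u hu.2 j i hker' (psiMap f (u j) p) ∈ X := by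
    have := X.sub_mem hαz hz
    simpa using this
  rw [phiMap_apply_psi, hp] at hback
  exact hback

lemma subU_Pl_zero (t : Fin k → ℕ) (h2 : DirectSum.IsInternal (fun l => cyc f (u l)))
    {a : ℕ} {l : Fin k} (hl : t l ≠ a) {v : V} (hv : v ∈ subU f u t a) :
    Pl f u h2 l v = 0 := by
  have hle : subU f u t a ≤ LinearMap.ker (Pl f u h2 l) := by
    refine iSup_le fun m => iSup_le fun hm => ?_
    intro w hw
    rw [LinearMap.mem_ker]
    have hml : m ≠ l := by
      intro h
      exact hl (h ▸ hm)
    exact Pl_apply_mem_ne f u h2 hml hw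
  exact hle hv

end main

theorem stmt10 [FiniteDimensional K V] (f : V →ₗ[K] V) (hf : IsNilpotent f)
    {k : ℕ} (u : Fin k → V) (t : Fin k → ℕ) (ht : Monotone t) (hu : IsGenTuple f u t)
    (X : Submodule K V) (hX : Chinv f X)
    (xs : ℕ → V) (hxs : ∀ a, xs a ∈ subU f u t a)
    (hsum : (∑ a ∈ Finset.image t Finset.univ, xs a) ∈ X)
    (s : ℕ) (i j : Fin k) (hij : i ≠ j) (hti : t i = s) (htj : t j = s) :
    xs s ∈ X := by
  classical
  set x := ∑ a ∈ Finset.image t Finset.univ, xs a with hxdef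
  have hs_mem : s ∈ Finset.image t Finset.univ :=
    Finset.mem_image.2 ⟨i, Finset.mem_univ i, hti⟩
  set S : Finset (Fin k) := Finset.univ.filter (fun l => t l = s) with hSdef
  have key : ∀ l, t l = s → Pl f u hu.2 l x ∈ X := by
    intro l hl
    by_cases hli : l = i
    · subst hli
      exact comp_mem f u t hu X hX hij hl htj hsum
    · exact comp_mem f u t hu X hX hli hl hti hsum
  have hproj : ∀ l, t l = s → Pl f u hu.2 l x = Pl f u hu.2 l (xs s) := by
    intro l hl
    rw [hxdef, map_sum]
    refine Finset.sum_eq_single_of_mem s hs_mem ?_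
    intro a _ hae
    exact subU_Pl_zero f u t hu.2 (by rw [hl]; exact fun h => hae h.symm) (hxs a)
  have hxs_sum : xs s = ∑ l ∈ S, Pl f u hu.2 l (xs s) := by
    have h1 : ∑ l ∈ S, Pl f u hu.2 l (xs s) = ∑ l, Pl f u hu.2 l (xs s) := by
      refine Finset.sum_subset (Finset.subset_univ S) ?_
      intro l _ hlS
      have hl : t l ≠ s := by
        intro h
        exact hlS (Finset.mem_filter.2 ⟨Finset.mem_univ l, h⟩)
      exact subU_Pl_zero f u t hu.2 hl (hxs s)
    rw [h1, sum_Pl]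
  rw [hxs_sum]
  refine Submodule.sum_mem X ?_
  intro l hlS
  have hl : t l = s := (Finset.mem_filter.1 hlS).2
  rw [← hproj l hl]
  exact key l hl
end

section
/- Let V = ⟨u_1⟩ ⊕ ⟨u_2⟩ with f nilpotent, e(u_1) = q and e(u_2) = q + 1 (two Jordan blocks of consecutive sizes). Then every f-invariant subspace W of V is marked, i.e., W has a Jordan basis extendable to a Jordan basis of V. -/
open LinearMap

variable {K : Type*} [Field K] {V : Type*} [AddCommGroup V] [Module K V]

/-- `W` is a marked subspace: it is spanned by `f`-shifts of the members of some
generator tuple of `V` (equivalently, a Jordan basis of `W` extends to one of `V`). -/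
def Marked (f : V →ₗ[K] V) (W : Submodule K V) : Prop :=
  ∃ (k : ℕ) (u : Fin k → V) (t r : Fin k → ℕ),
    IsGenTuple f u t ∧ (∀ i, r i ≤ t i) ∧ W = ⨆ i, cyc f ((f ^ r i) (u i))


open Polynomial

lemma aux_mem_cyc {f : V →ₗ[K] V} {x y : V} :
    y ∈ cyc f x ↔ ∃ p : K[X], (aeval f p) x = y := by
  constructor
  · intro hy
    refine Submodule.span_induction ?_ ?_ ?_ ?_ hy
    · rintro _ ⟨i, rfl⟩; exact ⟨X ^ i, by simp⟩
    · exact ⟨0, by simp⟩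
    · rintro a b - - ⟨p, rfl⟩ ⟨r, rfl⟩; exact ⟨p + r, by simp⟩
    · rintro c a - ⟨p, rfl⟩; exact ⟨C c * p, by simp [Module.algebraMap_end_apply]⟩
  · rintro ⟨p, rfl⟩
    rw [aeval_eq_sum_range, LinearMap.coe_sum, Finset.sum_apply]
    refine Submodule.sum_mem _ fun i _ => ?_
    rw [LinearMap.smul_apply]
    exact Submodule.smul_mem _ _ (Submodule.subset_span ⟨i, rfl⟩)

lemma aux_comm (a : ℕ) (p : K[X]) (f : V →ₗ[K] V) (x : V) :
    (f ^ a) (aeval f p x) = aeval f p ((f ^ a) x) := by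
  rw [← Module.End.mul_apply, ← Module.End.mul_apply (aeval f p)]
  congr 1
  rw [show (f ^ a : V →ₗ[K] V) = aeval f (X ^ a : K[X]) by rw [map_pow, aeval_X], ← map_mul,
    ← map_mul, mul_comm]

lemma aux_cyc_invariant (f : V →ₗ[K] V) (x : V) : (cyc f x).map f ≤ cyc f x := by
  rw [Submodule.map_le_iff_le_comap]
  refine Submodule.span_le.2 ?_
  rintro _ ⟨i, rfl⟩
  have : f ((f ^ i) x) = (f ^ (i + 1)) x := by
    rw [← Module.End.mul_apply, ← pow_succ']
  exact Submodule.mem_comap.2 (by rw [this]; exact Submodule.subset_span ⟨i + 1, rfl⟩)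

lemma aux_aeval_mem_cyc {f : V →ₗ[K] V} {x y : V} (hy : y ∈ cyc f x) (p : K[X]) :
    aeval f p y ∈ cyc f x := by
  obtain ⟨r, rfl⟩ := aux_mem_cyc.1 hy
  exact aux_mem_cyc.2 ⟨p * r, by rw [map_mul, Module.End.mul_apply]⟩

lemma aux_pow_mem_cyc {f : V →ₗ[K] V} {x y : V} (hy : y ∈ cyc f x) (j : ℕ) :
    (f ^ j) y ∈ cyc f x := by
  have := aux_aeval_mem_cyc hy (X ^ j)
  rwa [map_pow, aeval_X] at this

lemma aux_cyc_le_of_mem {f : V →ₗ[K] V} {x y : V} (hy : y ∈ cyc f x) : cyc f y ≤ cyc f x := by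
  refine Submodule.span_le.2 ?_
  rintro _ ⟨i, rfl⟩
  exact aux_pow_mem_cyc hy i

lemma aux_self_mem_cyc (f : V →ₗ[K] V) (x : V) : x ∈ cyc f x :=
  Submodule.subset_span ⟨0, by simp⟩

lemma aux_cyc_le_of_inv {f : V →ₗ[K] V} {W : Submodule K V} (hW : W.map f ≤ W) {x : V}
    (hx : x ∈ W) : cyc f x ≤ W := by
  have key : ∀ i : ℕ, (f ^ i) x ∈ W := by
    intro i
    induction i with
    | zero => simpa using hx
    | succ n ih =>
      have : f ((f ^ n) x) ∈ W := hW ⟨_, ih, rfl⟩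
      rwa [← Module.End.mul_apply, ← pow_succ'] at this
  refine Submodule.span_le.2 ?_
  rintro _ ⟨i, rfl⟩
  exact key i

lemma aux_cyc_zero (f : V →ₗ[K] V) : cyc f 0 = ⊥ :=
  eq_bot_iff.2 (Submodule.span_le.2 (by rintro _ ⟨i, rfl⟩; simp))

lemma aux_pow_zero {f : V →ₗ[K] V} {x : V} {n m : ℕ} (h : (f ^ n) x = 0) (hnm : n ≤ m) :
    (f ^ m) x = 0 := by
  have : f ^ m = f ^ (m - n) * f ^ n := by rw [← pow_add]; congr 1; omega
  rw [this, Module.End.mul_apply, h, map_zero]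

lemma aux_pow_ne_zero {f : V →ₗ[K] V} {x : V} {m j : ℕ} (h : (f ^ m) x ≠ 0) (hj : j ≤ m) :
    (f ^ j) x ≠ 0 := fun h0 => h (aux_pow_zero h0 hj)

lemma aux_expEq_of {f : V →ₗ[K] V} {x : V} {ℓ : ℕ} (h1 : 1 ≤ ℓ) (h0 : (f ^ ℓ) x = 0)
    (hne : (f ^ (ℓ - 1)) x ≠ 0) : ExpEq f x ℓ :=
  ⟨h0, fun j hj => aux_pow_ne_zero hne (by omega)⟩

lemma aux_expEq_le {f : V →ₗ[K] V} {x : V} {ℓ N : ℕ} (h : ExpEq f x ℓ) (hN : (f ^ N) x = 0) :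
    ℓ ≤ N := by
  by_contra hc
  exact h.2 N (by omega) hN

lemma aux_cyc_pow_zero {f : V →ₗ[K] V} {x y : V} {ℓ : ℕ} (hx : (f ^ ℓ) x = 0)
    (hy : y ∈ cyc f x) : (f ^ ℓ) y = 0 := by
  obtain ⟨p, rfl⟩ := aux_mem_cyc.1 hy
  rw [aux_comm, hx, map_zero]

lemma aux_aeval_of_ker {f : V →ₗ[K] V} {y : V} (h : f y = 0) (p : K[X]) :
    aeval f p y = p.coeff 0 • y := by
  obtain ⟨r, hr⟩ : X ∣ (p - C (p.coeff 0)) := X_dvd_iff.2 (by simp)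
  have hp : p = C (p.coeff 0) + r * X := by linear_combination hr
  conv_lhs => rw [hp]
  rw [map_add, map_mul, aeval_X, aeval_C, LinearMap.add_apply, Module.End.mul_apply, h,
    map_zero, add_zero, Module.algebraMap_end_apply]
lemma aux_li {f : V →ₗ[K] V} {x : V} {ℓ : ℕ} (h : ExpEq f x ℓ) :
    LinearIndependent K fun i : Fin ℓ => (f ^ (i : ℕ)) x := by
  rw [Fintype.linearIndependent_iff]
  intro g hg
  suffices H : ∀ n : ℕ, ∀ i : Fin ℓ, (i : ℕ) < n → g i = 0 by
    exact fun i => H ℓ i i.2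
  intro n
  induction n with
  | zero => exact fun i hi => absurd hi (by omega)
  | succ n ih =>
    intro i hi
    rcases Nat.lt_or_ge (i : ℕ) n with h' | h'
    · exact ih i h'
    have hin : (i : ℕ) = n := by omega
    have hn : n < ℓ := by omega
    have hl1 : 1 ≤ ℓ := by omega
    have this0 := congrArg (fun v => (f ^ (ℓ - 1 - n)) v) hg
    simp only [map_zero] at this0
    rw [map_sum] at this0
    have key : ∀ j : Fin ℓ,
        (f ^ (ℓ - 1 - n)) (g j • (f ^ (j : ℕ)) x)
          = if (j : ℕ) = n then g j • (f ^ (ℓ - 1)) x else 0 := by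
      intro j
      rw [map_smul, ← Module.End.mul_apply, ← pow_add]
      rcases lt_trichotomy (j : ℕ) n with hj | hj | hj
      · rw [if_neg (by omega), ih j hj, zero_smul]
      · have harith : ℓ - 1 - n + (j : ℕ) = ℓ - 1 := by omega
        rw [if_pos hj, harith]
      · rw [if_neg (by omega)]
        have hz : (f ^ (ℓ - 1 - n + (j : ℕ))) x = 0 := aux_pow_zero h.1 (by omega)
        rw [hz, smul_zero]
    rw [Finset.sum_congr rfl (fun j _ => key j)] at this0
    rw [Finset.sum_eq_single i
      (fun b _ hb => by rw [if_neg (fun hbn => hb (Fin.ext (by omega)))])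
      (by intro hb; exact absurd (Finset.mem_univ i) hb)] at this0
    rw [if_pos hin] at this0
    exact (smul_eq_zero.1 this0).resolve_right (h.2 (ℓ - 1) (by omega))

lemma aux_cyc_eq_span {f : V →ₗ[K] V} {x : V} {ℓ : ℕ} (h0 : (f ^ ℓ) x = 0) :
    cyc f x = Submodule.span K (Set.range fun i : Fin ℓ => (f ^ (i : ℕ)) x) := by
  apply le_antisymm
  · refine Submodule.span_le.2 ?_
    rintro _ ⟨i, rfl⟩
    show (f ^ i) x ∈ _
    rcases Nat.lt_or_ge i ℓ with hi | hi
    · exact Submodule.subset_span ⟨⟨i, hi⟩, rfl⟩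
    · rw [aux_pow_zero h0 hi]
      exact Submodule.zero_mem _
  · refine Submodule.span_le.2 ?_
    rintro _ ⟨i, rfl⟩
    exact Submodule.subset_span ⟨(i : ℕ), rfl⟩

lemma aux_finrank_cyc [FiniteDimensional K V] {f : V →ₗ[K] V} {x : V} {ℓ : ℕ}
    (h : ExpEq f x ℓ) : Module.finrank K (cyc f x) = ℓ := by
  rw [aux_cyc_eq_span h.1, finrank_span_eq_card (aux_li h), Fintype.card_fin]

lemma aux_ann {f : V →ₗ[K] V} {x : V} {ℓ : ℕ} (h : ExpEq f x ℓ) {p : K[X]}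
    (hp : aeval f p x = 0) : X ^ ℓ ∣ p := by
  rcases Nat.eq_zero_or_pos ℓ with rfl | hl
  · exact ⟨p, by rw [pow_zero, one_mul]⟩
  have hm : (X ^ ℓ : K[X]).Monic := monic_X_pow ℓ
  set r := p %ₘ (X ^ ℓ) with hrdef
  have hsum : r + X ^ ℓ * (p /ₘ (X ^ ℓ)) = p := modByMonic_add_div p (X ^ ℓ)
  have hr0 : aeval f r x = 0 := by
    have : aeval f p x = aeval f r x + aeval f ((p /ₘ (X ^ ℓ)) * X ^ ℓ) x := by
      conv_lhs => rw [← hsum]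
      rw [map_add, LinearMap.add_apply]
      congr 2
      rw [mul_comm]
    rw [this] at hp
    rw [map_mul, map_pow, aeval_X, Module.End.mul_apply, h.1, map_zero, add_zero] at hp
    exact hp
  have hdeg : r.natDegree < ℓ := by
    rcases eq_or_ne r 0 with hr | hr
    · rw [hr]; simpa using hl
    have := degree_modByMonic_lt p hm
    rw [← hrdef] at this
    have h2 : r.degree < (ℓ : WithBot ℕ) := by
      simpa [degree_X_pow] using this
    exact natDegree_lt_iff_degree_lt hr |>.2 h2
  have hzero : r = 0 := by
    have hsum2 : ∑ i : Fin ℓ, r.coeff (i : ℕ) • (f ^ (i : ℕ)) x = 0 := by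
      have := aeval_eq_sum_range' (x := f) hdeg
      have happ := congrArg (fun g => g x) this
      rw [LinearMap.coe_sum, Finset.sum_apply] at happ
      rw [Fin.sum_univ_eq_sum_range (fun i => r.coeff i • (f ^ i) x) ℓ]
      simp only [LinearMap.smul_apply] at happ
      rw [hr0] at happ
      exact happ.symm
    have hco := Fintype.linearIndependent_iff.1 (aux_li h) (fun i => r.coeff (i : ℕ)) hsum2
    ext j
    rcases Nat.lt_or_ge j ℓ with hj | hj
    · simpa using hco ⟨j, hj⟩
    · simp [coeff_eq_zero_of_natDegree_lt (lt_of_lt_of_le hdeg hj)]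
  exact ⟨p /ₘ (X ^ ℓ), by conv_lhs => rw [← hsum, hzero, zero_add]⟩

lemma aux_div {f : V →ₗ[K] V} {x y : V} {ℓ j : ℕ} (h : ExpEq f x ℓ) (hy : y ∈ cyc f x)
    (hj : j ≤ ℓ) (hjy : (f ^ j) y = 0) : ∃ p : K[X], aeval f p ((f ^ (ℓ - j)) x) = y := by
  obtain ⟨p, rfl⟩ := aux_mem_cyc.1 hy
  have h0 : aeval f (p * X ^ j) x = 0 := by
    rw [map_mul, map_pow, aeval_X, Module.End.mul_apply, ← aux_comm, hjy]
  obtain ⟨s, hs⟩ := aux_ann h h0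
  have hps : p * X ^ j = (s * X ^ (ℓ - j)) * X ^ j := by
    have harith : ℓ - j + j = ℓ := by omega
    rw [hs, mul_assoc, ← pow_add, harith]
    ring
  have hp : p = s * X ^ (ℓ - j) := by
    have hXj : (X ^ j : K[X]) ≠ 0 := pow_ne_zero _ X_ne_zero
    exact mul_right_cancel₀ hXj hps
  refine ⟨s, ?_⟩
  rw [hp, map_mul, map_pow, aeval_X, Module.End.mul_apply]

lemma aux_inv {α : K[X]} (h : α.coeff 0 ≠ 0) (m : ℕ) : ∃ β : K[X], X ^ m ∣ α * β - 1 := by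
  induction m with
  | zero => exact ⟨0, by simp⟩
  | succ n ih =>
    obtain ⟨β, γ, hγ⟩ := ih
    set c := γ.coeff 0 / α.coeff 0 with hc
    refine ⟨β - C c * X ^ n, ?_⟩
    have key : α * (β - C c * X ^ n) - 1 = X ^ n * (γ - C c * α) := by
      linear_combination hγ
    have hX : X ∣ (γ - C c * α) := by
      rw [X_dvd_iff]
      rw [coeff_sub, coeff_C_mul, hc, div_mul_cancel₀ _ h, sub_self]
    obtain ⟨δ, hδ⟩ := hX
    exact ⟨δ, by rw [key, hδ]; ring⟩
lemma aux_aeval_congr {f : V →ₗ[K] V} {x : V} {ℓ : ℕ} (hx : (f ^ ℓ) x = 0) {p r : K[X]}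
    (h : X ^ ℓ ∣ p - r) : aeval f p x = aeval f r x := by
  obtain ⟨s, hs⟩ := h
  have hp : p = r + s * X ^ ℓ := by linear_combination hs
  rw [hp, map_add, map_mul, map_pow, aeval_X, LinearMap.add_apply, Module.End.mul_apply, hx,
    map_zero, add_zero]

lemma aux_cyc_unit {f : V →ₗ[K] V} {x : V} {ℓ : ℕ} (hx : (f ^ ℓ) x = 0) {α : K[X]}
    (hα : α.coeff 0 ≠ 0) : cyc f (aeval f α x) = cyc f x := by
  apply le_antisymm (aux_cyc_le_of_mem (aux_mem_cyc.2 ⟨α, rfl⟩))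
  obtain ⟨β, hβ⟩ := aux_inv hα ℓ
  apply aux_cyc_le_of_mem
  refine aux_mem_cyc.2 ⟨β, ?_⟩
  rw [← Module.End.mul_apply, ← map_mul]
  have hdvd : X ^ ℓ ∣ β * α - 1 := by
    obtain ⟨γ, hγ⟩ := hβ
    exact ⟨γ, by linear_combination hγ⟩
  rw [aux_aeval_congr hx hdvd]
  simp

lemma aux_max_exp {f : V →ₗ[K] V} {W : Submodule K V} {N : ℕ}
    (hbd : ∀ x ∈ W, (f ^ N) x = 0) (hW : W ≠ ⊥) :
    ∃ e w, w ∈ W ∧ ExpEq f w e ∧ 1 ≤ e ∧ ∀ x ∈ W, (f ^ e) x = 0 := by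
  have hexp : ∀ x ∈ W, x ≠ 0 → ∃ n, ExpEq f x n ∧ 1 ≤ n := by
    intro x hx hx0
    classical
    have hex : ∃ n, (f ^ n) x = 0 := ⟨N, hbd x hx⟩
    refine ⟨Nat.find hex, ⟨Nat.find_spec hex, fun j hj => Nat.find_min hex hj⟩, ?_⟩
    rcases Nat.eq_zero_or_pos (Nat.find hex) with h0 | h0
    · exact absurd (by simpa [h0] using Nat.find_spec hex) hx0
    · exact h0
  obtain ⟨w0, hw0, hw00⟩ := Submodule.exists_mem_ne_zero_of_ne_bot hW
  set S : Set ℕ := {n | ∃ w ∈ W, ExpEq f w n} with hS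
  obtain ⟨n0, hn0, hn01⟩ := hexp w0 hw0 hw00
  have hSne : S.Nonempty := ⟨n0, w0, hw0, hn0⟩
  have hSbdd : BddAbove S := by
    refine ⟨N, ?_⟩
    rintro n ⟨w, hw, hwn⟩
    exact aux_expEq_le hwn (hbd w hw)
  obtain ⟨w, hwW, hwe⟩ := Nat.sSup_mem hSne hSbdd
  refine ⟨sSup S, w, hwW, hwe, le_trans hn01 (le_csSup hSbdd ⟨w0, hw0, hn0⟩), ?_⟩
  intro x hx
  by_contra hfx
  have hx0 : x ≠ 0 := by
    intro h0
    exact hfx (by rw [h0, map_zero])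
  obtain ⟨n, hn, _⟩ := hexp x hx hx0
  have hle : n ≤ sSup S := le_csSup hSbdd ⟨x, hx, hn⟩
  exact hfx (aux_pow_zero hn.1 hle)

lemma aux_inv_cyclic {f : V →ₗ[K] V} {x : V} {ℓ : ℕ} (h : ExpEq f x ℓ)
    {U : Submodule K V} (hU : U ≤ cyc f x) (hinv : U.map f ≤ U) :
    ∃ s, s ≤ ℓ ∧ U = cyc f ((f ^ s) x) := by
  rcases eq_or_ne U ⊥ with rfl | hne
  · exact ⟨ℓ, le_rfl, by rw [h.1, aux_cyc_zero]⟩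
  obtain ⟨e, w, hwU, hwe, he1, hkill⟩ :=
    aux_max_exp (N := ℓ) (fun y hy => aux_cyc_pow_zero h.1 (hU hy)) hne
  have heℓ : e ≤ ℓ := aux_expEq_le hwe (aux_cyc_pow_zero h.1 (hU hwU))
  obtain ⟨p, hp⟩ := aux_div h (hU hwU) heℓ hwe.1
  have hp0 : p.coeff 0 ≠ 0 := by
    intro hc
    obtain ⟨p', hp'⟩ : X ∣ p := X_dvd_iff.2 hc
    have hw1 : (f ^ (e - 1)) w = 0 := by
      rw [← hp, hp', aux_comm]
      have : (f ^ (e - 1)) ((f ^ (ℓ - e)) x) = (f ^ (ℓ - 1)) x := by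
        rw [← Module.End.mul_apply, ← pow_add]
        congr 2
        omega
      rw [this]
      rw [show (X * p' : K[X]) = p' * X by ring, map_mul, aeval_X, Module.End.mul_apply]
      have hz : f ((f ^ (ℓ - 1)) x) = 0 := by
        rw [← Module.End.mul_apply, ← pow_succ']
        have : ℓ - 1 + 1 = ℓ := by omega
        rw [this]
        exact h.1
      rw [hz, map_zero]
    exact hwe.2 (e - 1) (by omega) hw1
  have hfx : (f ^ e) ((f ^ (ℓ - e)) x) = 0 := by
    rw [← Module.End.mul_apply, ← pow_add]
    exact aux_pow_zero h.1 (by omega)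
  have hcyc : cyc f w = cyc f ((f ^ (ℓ - e)) x) := by
    rw [← hp]
    exact aux_cyc_unit hfx hp0
  refine ⟨ℓ - e, by omega, le_antisymm ?_ ?_⟩
  · intro y hy
    obtain ⟨r, hr⟩ := aux_div h (hU hy) heℓ (hkill y hy)
    exact aux_mem_cyc.2 ⟨r, hr⟩
  · rw [← hcyc]
    exact aux_cyc_le_of_inv hinv hwU

lemma aux_iSup_fin2 (g : Fin 2 → Submodule K V) : (⨆ i, g i) = g 0 ⊔ g 1 := by
  apply le_antisymm
  · apply iSup_le
    intro i
    fin_cases i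
    exacts [le_sup_left, le_sup_right]
  · exact sup_le (le_iSup g 0) (le_iSup g 1)

lemma aux_internal {f : V →ₗ[K] V} {v v' : V} (h : IsCompl (cyc f v) (cyc f v')) :
    DirectSum.IsInternal (fun i : Fin 2 => cyc f (![v, v'] i)) := by
  rw [DirectSum.isInternal_submodule_iff_isCompl _ (i := (0 : Fin 2)) (j := 1) (by decide)
    (by ext i; fin_cases i <;> simp)]
  simpa using h

lemma aux_disj_add {X Y : Submodule K V} (h : Disjoint X Y) {a b : V} (ha : a ∈ X)
    (hb : b ∈ Y) (hab : a + b = 0) : a = 0 ∧ b = 0 := by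
  have ha' : a ∈ X ⊓ Y := by
    refine ⟨ha, ?_⟩
    have : a = -b := eq_neg_of_add_eq_zero_left hab
    rw [this]
    exact neg_mem hb
  have h0 : a = 0 := by
    have := h.le_bot ha'
    simpa using this
  exact ⟨h0, by rw [h0, zero_add] at hab; exact hab⟩

lemma aux_compl_of [FiniteDimensional K V] {X Y : Submodule K V} (htop : X ⊔ Y = ⊤)
    (hfr : Module.finrank K X + Module.finrank K Y = Module.finrank K V) : IsCompl X Y := by
  have hkey := Submodule.finrank_sup_add_finrank_inf_eq X Y
  rw [htop, finrank_top, hfr] at hkey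
  have h0 : Module.finrank K ↥(X ⊓ Y) = 0 := by omega
  have hbot : X ⊓ Y = ⊥ := Submodule.finrank_eq_zero.1 h0
  exact ⟨disjoint_iff.2 hbot, codisjoint_iff.2 htop⟩

lemma aux_final [FiniteDimensional K V] {f : V →ₗ[K] V} {v v' : V} {t t' e : ℕ}
    (hv : ExpEq f v t) (hv' : ExpEq f v' t') (hc : IsCompl (cyc f v) (cyc f v'))
    {W : Submodule K V} (hW : W.map f ≤ W) (he : e ≤ t)
    (hwW : ((f ^ (t - e)) v) ∈ W) (hkill : ∀ x ∈ W, (f ^ e) x = 0) :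
    ∃ s, s ≤ t' ∧ W = cyc f ((f ^ (t - e)) v) ⊔ cyc f ((f ^ s) v') := by
  have hinv' : (W ⊓ cyc f v').map f ≤ W ⊓ cyc f v' :=
    le_inf ((Submodule.map_mono inf_le_left).trans hW)
      ((Submodule.map_mono inf_le_right).trans (aux_cyc_invariant f v'))
  obtain ⟨s, hs, hUs⟩ := aux_inv_cyclic hv' inf_le_right hinv'
  refine ⟨s, hs, le_antisymm ?_ ?_⟩
  · intro z hz
    have hz2 : z ∈ cyc f v ⊔ cyc f v' := by
      rw [hc.codisjoint.eq_top]
      trivial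
    obtain ⟨a, ha, b, hb, hab⟩ := Submodule.mem_sup.1 hz2
    have hz0 : (f ^ e) a + (f ^ e) b = 0 := by
      rw [← map_add, hab]
      exact hkill z hz
    obtain ⟨hfa, hfb⟩ := aux_disj_add hc.disjoint (aux_pow_mem_cyc ha e)
      (aux_pow_mem_cyc hb e) hz0
    obtain ⟨p, hp⟩ := aux_div hv ha he hfa
    have haw : a ∈ cyc f ((f ^ (t - e)) v) := aux_mem_cyc.2 ⟨p, hp⟩
    have hcycW : cyc f ((f ^ (t - e)) v) ≤ W := aux_cyc_le_of_inv hW hwW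
    have hbW : b ∈ W := by
      have : b = z - a := by rw [← hab]; abel
      rw [this]
      exact Submodule.sub_mem _ hz (hcycW haw)
    refine Submodule.mem_sup.2 ⟨a, haw, b, ?_, hab⟩
    rw [← hUs]
    exact ⟨hbW, hb⟩
  · refine sup_le (aux_cyc_le_of_inv hW hwW) ?_
    rw [← hUs]
    exact inf_le_left
lemma aux_pow_pow (f : V →ₗ[K] V) (a b : ℕ) (x : V) :
    (f ^ a) ((f ^ b) x) = (f ^ (a + b)) x := by
  rw [← Module.End.mul_apply, ← pow_add]

lemma aux_aeval_aeval (f : V →ₗ[K] V) (p r : K[X]) (x : V) :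
    aeval f p (aeval f r x) = aeval f (p * r) x := by
  rw [map_mul, Module.End.mul_apply]

lemma aux_sup_inv {f : V →ₗ[K] V} {X Y : Submodule K V} (hX : X.map f ≤ X)
    (hY : Y.map f ≤ Y) : (X ⊔ Y).map f ≤ X ⊔ Y := by
  rw [Submodule.map_sup]
  exact sup_le_sup hX hY
theorem stmt12 [FiniteDimensional K V] (f : V →ₗ[K] V) (hf : IsNilpotent f)
    (u₁ u₂ : V) (q : ℕ) (h₁ : ExpEq f u₁ q) (h₂ : ExpEq f u₂ (q + 1))
    (hV : IsCompl (cyc f u₁) (cyc f u₂)) :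
    ∀ W : Submodule K V, W.map f ≤ W → Marked f W := by
  intro W hW
  have hu₁N : (f ^ (q + 1)) u₁ = 0 := aux_pow_zero h₁.1 (by omega)
  have htop : ∀ x : V, (f ^ (q + 1)) x = 0 := by
    intro x
    have hx : x ∈ cyc f u₁ ⊔ cyc f u₂ := by rw [hV.codisjoint.eq_top]; trivial
    obtain ⟨a, ha, b, hb, hab⟩ := Submodule.mem_sup.1 hx
    rw [← hab, map_add, aux_cyc_pow_zero hu₁N ha, aux_cyc_pow_zero h₂.1 hb, add_zero]
  have hfrV : Module.finrank K V = q + (q + 1) := by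
    have hkey := Submodule.finrank_sup_add_finrank_inf_eq (cyc f u₁) (cyc f u₂)
    rw [hV.codisjoint.eq_top, hV.disjoint.eq_bot, finrank_top, finrank_bot,
      aux_finrank_cyc h₁, aux_finrank_cyc h₂, add_zero] at hkey
    exact hkey
  rcases eq_or_ne W ⊥ with rfl | hWne
  · refine ⟨2, ![u₁, u₂], ![q, q + 1], ![q, q + 1], ⟨?_, aux_internal hV⟩, ?_, ?_⟩
    · intro i; fin_cases i
      · simpa using h₁
      · simpa using h₂
    · intro i; fin_cases i <;> simp
    · rw [aux_iSup_fin2]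
      simp [h₁.1, h₂.1, aux_cyc_zero]
  obtain ⟨e, w, hwW, hwe, he1, hkill⟩ := aux_max_exp (fun x _ => htop x) hWne
  have heq1 : e ≤ q + 1 := aux_expEq_le hwe (htop w)
  have hwsup : w ∈ cyc f u₁ ⊔ cyc f u₂ := by rw [hV.codisjoint.eq_top]; trivial
  obtain ⟨a, ha, b, hb, hab⟩ := Submodule.mem_sup.1 hwsup
  have hz0 : (f ^ e) a + (f ^ e) b = 0 := by rw [← map_add, hab]; exact hwe.1
  obtain ⟨hfa, hfb⟩ := aux_disj_add hV.disjoint (aux_pow_mem_cyc ha e) (aux_pow_mem_cyc hb e) hz0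
  by_cases hcase : (f ^ (e - 1)) a = 0
  · -- Case 2 : the dominant part of w lies in the big block; new generator v₂ of exponent q+1
    have hfb1 : (f ^ (e - 1)) b ≠ 0 := by
      intro hb1
      apply hwe.2 (e - 1) (by omega)
      rw [← hab, map_add, hcase, hb1, add_zero]
    obtain ⟨p, hp⟩ := aux_div h₁ ha (show e - 1 ≤ q by omega) hcase
    rw [show q - (e - 1) = q + 1 - e by omega] at hp
    obtain ⟨s, hsb⟩ := aux_div h₂ hb (show e ≤ q + 1 by omega) hfb
    rw [show q + 1 - e = q + 1 - e from rfl] at hsb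
    have hs0 : s.coeff 0 ≠ 0 := by
      intro hc
      obtain ⟨s', hs'⟩ := X_dvd_iff.2 hc
      apply hfb1
      rw [← hsb, hs', show (X * s' : K[X]) = s' * X by ring, aux_comm,
        aux_pow_pow, show e - 1 + (q + 1 - e) = q by omega, map_mul, aeval_X,
        Module.End.mul_apply, ← Module.End.mul_apply f, ← pow_succ', h₂.1, map_zero]
    set v₂ := aeval f p u₁ + aeval f s u₂ with hv₂def
    have hv₂w : (f ^ (q + 1 - e)) v₂ = w := by
      rw [hv₂def, map_add, aux_comm, aux_comm, hp, hsb, hab]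
    have hexp₂ : ExpEq f v₂ (q + 1) := by
      refine aux_expEq_of (by omega) ?_ ?_
      · rw [hv₂def, map_add, aux_comm, aux_comm, hu₁N, h₂.1, map_zero, map_zero, add_zero]
      · show (f ^ q) v₂ ≠ 0
        rw [hv₂def, map_add, aux_comm, aux_comm, h₁.1, map_zero, zero_add]
        have hker : f ((f ^ q) u₂) = 0 := by
          rw [← Module.End.mul_apply, ← pow_succ', h₂.1]
        rw [aux_aeval_of_ker hker]
        exact smul_ne_zero hs0 (h₂.2 q (by omega))
    have hu₂mem : u₂ ∈ cyc f u₁ ⊔ cyc f v₂ := by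
      obtain ⟨β, hβ⟩ := aux_inv hs0 (q + 1)
      have hβv : aeval f β v₂ = aeval f (β * p) u₁ + aeval f (β * s) u₂ := by
        rw [hv₂def, map_add, aux_aeval_aeval, aux_aeval_aeval]
      have hβs : aeval f (β * s) u₂ = u₂ := by
        have hdvd : X ^ (q + 1) ∣ β * s - 1 := by
          obtain ⟨γ, hγ⟩ := hβ
          exact ⟨γ, by linear_combination hγ⟩
        rw [aux_aeval_congr h₂.1 hdvd, map_one, Module.End.one_apply]
      have : u₂ = aeval f β v₂ - aeval f (β * p) u₁ := by
        rw [hβv, hβs]; abel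
      rw [this]
      refine Submodule.sub_mem _ ?_ ?_
      · exact Submodule.mem_sup_right (aux_aeval_mem_cyc (aux_self_mem_cyc f v₂) β)
      · exact Submodule.mem_sup_left (aux_aeval_mem_cyc (aux_self_mem_cyc f u₁) (β * p))
    have hsupinv : (cyc f u₁ ⊔ cyc f v₂).map f ≤ cyc f u₁ ⊔ cyc f v₂ :=
      aux_sup_inv (aux_cyc_invariant f u₁) (aux_cyc_invariant f v₂)
    have hsuptop : cyc f u₁ ⊔ cyc f v₂ = ⊤ := by
      refine le_antisymm le_top ?_
      rw [← hV.codisjoint.eq_top]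
      exact sup_le le_sup_left (aux_cyc_le_of_inv hsupinv hu₂mem)
    have hcompl₂ : IsCompl (cyc f u₁) (cyc f v₂) := by
      refine aux_compl_of hsuptop ?_
      rw [aux_finrank_cyc h₁, aux_finrank_cyc hexp₂, hfrV]
    obtain ⟨s₂, hs₂, hWeq⟩ := aux_final hexp₂ h₁ hcompl₂.symm hW heq1
      (by rw [hv₂w]; exact hwW) hkill
    refine ⟨2, ![u₁, v₂], ![q, q + 1], ![s₂, q + 1 - e], ⟨?_, aux_internal hcompl₂⟩, ?_, ?_⟩
    · intro i; fin_cases i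
      · simpa using h₁
      · simpa using hexp₂
    · intro i; fin_cases i
      · simpa using hs₂
      · simp
    · rw [aux_iSup_fin2]
      simp only [Matrix.cons_val_zero, Matrix.cons_val_one, Matrix.head_cons]
      rw [hWeq, sup_comm]
  · -- Case 1 : the small block dominates; new generator v₁ of exponent q
    have heq : e ≤ q := by
      have hqa : (f ^ q) a = 0 := aux_cyc_pow_zero h₁.1 ha
      by_contra hc
      exact hcase (aux_pow_zero hqa (by omega))
    have hq1 : 1 ≤ q := by omega
    obtain ⟨p, hp⟩ := aux_div h₁ ha heq hfa
    have hp0 : p.coeff 0 ≠ 0 := by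
      intro hc
      obtain ⟨p', hp'⟩ := X_dvd_iff.2 hc
      apply hcase
      rw [← hp, hp', show (X * p' : K[X]) = p' * X by ring, aux_comm,
        aux_pow_pow, show e - 1 + (q - e) = q - 1 by omega, map_mul, aeval_X,
        Module.End.mul_apply, ← Module.End.mul_apply f, ← pow_succ',
        show q - 1 + 1 = q by omega, h₁.1, map_zero]
    obtain ⟨s, hsb⟩ := aux_div h₂ hb (show e ≤ q + 1 by omega) hfb
    set v₁ := aeval f p u₁ + aeval f s (f u₂) with hv₁def
    have hfu₂ : f u₂ = (f ^ 1) u₂ := by rw [pow_one]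
    have hv₁w : (f ^ (q - e)) v₁ = w := by
      rw [hv₁def, map_add, aux_comm, aux_comm, hp, hfu₂, aux_pow_pow,
        show q - e + 1 = q + 1 - e by omega, hsb, hab]
    have hexp₁ : ExpEq f v₁ q := by
      refine aux_expEq_of hq1 ?_ ?_
      · rw [hv₁def, map_add, aux_comm, aux_comm, h₁.1, hfu₂, aux_pow_pow,
          show q + 1 = q + 1 from rfl, h₂.1, map_zero, map_zero, add_zero]
      · intro hzero
        rw [hv₁def, map_add, aux_comm, aux_comm] at hzero
        have hker : f ((f ^ (q - 1)) u₁) = 0 := by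
          rw [← Module.End.mul_apply, ← pow_succ', show q - 1 + 1 = q by omega, h₁.1]
        rw [aux_aeval_of_ker hker] at hzero
        have hmem1 : p.coeff 0 • (f ^ (q - 1)) u₁ ∈ cyc f u₁ :=
          Submodule.smul_mem _ _ (aux_pow_mem_cyc (aux_self_mem_cyc f u₁) (q - 1))
        have hmem2 : aeval f s ((f ^ (q - 1)) (f u₂)) ∈ cyc f u₂ :=
          aux_aeval_mem_cyc (by
            rw [hfu₂, aux_pow_pow]
            exact aux_pow_mem_cyc (aux_self_mem_cyc f u₂) _) s
        obtain ⟨hz1, -⟩ := aux_disj_add hV.disjoint hmem1 hmem2 hzero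
        exact smul_ne_zero hp0 (h₁.2 (q - 1) (by omega)) hz1
    have hu₁mem : u₁ ∈ cyc f v₁ ⊔ cyc f u₂ := by
      obtain ⟨β, hβ⟩ := aux_inv hp0 q
      have hβv : aeval f β v₁ = aeval f (β * p) u₁ + aeval f (β * s) (f u₂) := by
        rw [hv₁def, map_add, aux_aeval_aeval, aux_aeval_aeval]
      have hβp : aeval f (β * p) u₁ = u₁ := by
        have hdvd : X ^ q ∣ β * p - 1 := by
          obtain ⟨γ, hγ⟩ := hβ
          exact ⟨γ, by linear_combination hγ⟩
        rw [aux_aeval_congr h₁.1 hdvd, map_one, Module.End.one_apply]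
      have : u₁ = aeval f β v₁ - aeval f (β * s) (f u₂) := by
        rw [hβv, hβp]; abel
      rw [this]
      refine Submodule.sub_mem _ ?_ ?_
      · exact Submodule.mem_sup_left (aux_aeval_mem_cyc (aux_self_mem_cyc f v₁) β)
      · refine Submodule.mem_sup_right (aux_aeval_mem_cyc ?_ (β * s))
        rw [hfu₂]
        exact aux_pow_mem_cyc (aux_self_mem_cyc f u₂) 1
    have hsupinv : (cyc f v₁ ⊔ cyc f u₂).map f ≤ cyc f v₁ ⊔ cyc f u₂ :=
      aux_sup_inv (aux_cyc_invariant f v₁) (aux_cyc_invariant f u₂)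
    have hsuptop : cyc f v₁ ⊔ cyc f u₂ = ⊤ := by
      refine le_antisymm le_top ?_
      rw [← hV.codisjoint.eq_top]
      exact sup_le (aux_cyc_le_of_inv hsupinv hu₁mem) le_sup_right
    have hcompl₁ : IsCompl (cyc f v₁) (cyc f u₂) := by
      refine aux_compl_of hsuptop ?_
      rw [aux_finrank_cyc hexp₁, aux_finrank_cyc h₂, hfrV]
    obtain ⟨s₂, hs₂, hWeq⟩ := aux_final hexp₁ h₂ hcompl₁ hW heq
      (by rw [hv₁w]; exact hwW) hkill
    refine ⟨2, ![v₁, u₂], ![q, q + 1], ![q - e, s₂], ⟨?_, aux_internal hcompl₁⟩, ?_, ?_⟩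
    · intro i; fin_cases i
      · simpa using hexp₁
      · simpa using h₂
    · intro i; fin_cases i
      · simp
      · simpa using hs₂
    · rw [aux_iSup_fin2]
      simp only [Matrix.cons_val_zero, Matrix.cons_val_one, Matrix.head_cons]
      exact hWeq
end

section
/- Let K = GF(2) and f nilpotent on V such that the Jordan form of f contains exactly one block of size a_ρ and exactly one block of size a_τ with a_τ > a_ρ + 1. Let Y = {y ∈ V : e(y) = 2, h(y) = a_ρ − 1, h(fy) = a_τ − 1}. Then the subspace ⟨Y⟩ generated by Y is characteristic but not hyperinvariant. -/
set_option maxHeartbeats 2000000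

open LinearMap

variable {K : Type*} [Field K] {V : Type*} [AddCommGroup V] [Module K V]

section auxlemmas

lemma comm_pow {f g : V →ₗ[K] V} (h : g ∘ₗ f = f ∘ₗ g) (i : ℕ) (x : V) :
    g ((f ^ i) x) = (f ^ i) (g x) := by
  have h' : ∀ v, g (f v) = f (g v) := fun v => congrFun (congrArg DFunLike.coe h) v
  induction i with
  | zero => simp
  | succ n ih => rw [pow_succ', Module.End.mul_apply, Module.End.mul_apply, h', ih]

lemma range_pow_le (f : V →ₗ[K] V) {a b : ℕ} (h : a ≤ b) :
    LinearMap.range (f ^ b) ≤ LinearMap.range (f ^ a) := by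
  obtain ⟨c, rfl⟩ : ∃ c, b = a + c := ⟨b - a, by omega⟩
  rintro x ⟨z, rfl⟩
  exact ⟨(f ^ c) z, by rw [pow_add, Module.End.mul_apply]⟩

lemma zmod2_cases : ∀ c : ZMod 2, c = 0 ∨ c = 1 := by decide

lemma mem_cyc_self (f : V →ₗ[K] V) (y : V) : y ∈ cyc f y :=
  Submodule.subset_span ⟨0, by simp⟩

lemma fpow_mem_cyc (f : V →ₗ[K] V) (y : V) (i : ℕ) : (f ^ i) y ∈ cyc f y :=
  Submodule.subset_span ⟨i, rfl⟩

lemma cyc_map_f_le (f : V →ₗ[K] V) (y : V) : (cyc f y).map f ≤ cyc f y := by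
  rw [cyc, Submodule.map_span_le]
  rintro m ⟨i, rfl⟩
  have : f ((f ^ i) y) = (f ^ (i + 1)) y := by rw [pow_succ', Module.End.mul_apply]
  rw [this]
  exact fpow_mem_cyc f y (i + 1)

lemma cyc_le_of_mem {f : V →ₗ[K] V} {y : V} {Z : Submodule K V}
    (h : ∀ i : ℕ, (f ^ i) y ∈ Z) : cyc f y ≤ Z := by
  rw [cyc, Submodule.span_le]; rintro m ⟨i, rfl⟩; exact h i

lemma symm_comm {α : V ≃ₗ[K] V} {f : V →ₗ[K] V}
    (h : (α : V →ₗ[K] V) ∘ₗ f = f ∘ₗ (α : V →ₗ[K] V)) :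
    (α.symm : V →ₗ[K] V) ∘ₗ f = f ∘ₗ (α.symm : V →ₗ[K] V) := by
  ext v
  apply α.injective
  have h' : ∀ v, α (f v) = f (α v) := fun v => congrFun (congrArg DFunLike.coe h) v
  simp only [LinearMap.comp_apply, LinearEquiv.coe_coe]
  rw [h', α.apply_symm_apply, α.apply_symm_apply]

lemma alpha_mem_Y {f : V →ₗ[K] V} {α : V ≃ₗ[K] V}
    (h : (α : V →ₗ[K] V) ∘ₗ f = f ∘ₗ (α : V →ₗ[K] V)) {p q : ℕ} {y : V}
    (hy : ExpEq f y 2 ∧ HeightEq f y p ∧ HeightEq f (f y) q) :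
    ExpEq f (α y) 2 ∧ HeightEq f (α y) p ∧ HeightEq f (f (α y)) q := by
  obtain ⟨⟨he0, he1⟩, ⟨hh1, hh2⟩, ⟨hg1, hg2⟩⟩ := hy
  have hpow : ∀ i x, α ((f ^ i) x) = (f ^ i) (α x) := fun i x => comm_pow h i x
  have hfa : f (α y) = α (f y) := by
    have := hpow 1 y; simpa using this.symm
  have hrange : ∀ (q : ℕ) (x : V), x ∈ LinearMap.range (f ^ q) ↔
      α x ∈ LinearMap.range (f ^ q) := by
    intro q x
    constructor
    · rintro ⟨z, rfl⟩; exact ⟨α z, (hpow q z).symm⟩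
    · rintro ⟨z, hz⟩
      refine ⟨α.symm z, ?_⟩
      have h2 : α.symm ((f ^ q) z) = (f ^ q) (α.symm z) := comm_pow (symm_comm h) q z
      rw [← h2, hz, α.symm_apply_apply]
  refine ⟨⟨?_, ?_⟩, ⟨?_, ?_⟩, ?_, ?_⟩
  · rw [← hpow, he0, map_zero]
  · intro j hj
    rw [← hpow]
    simp only [ne_eq, LinearEquiv.map_eq_zero_iff]
    exact he1 j hj
  · exact (hrange p y).mp hh1
  · rw [← hrange]; exact hh2
  · rw [hfa]; exact (hrange q (f y)).mp hg1
  · rw [hfa, ← hrange]; exact hg2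

lemma chinv_part (f : V →ₗ[K] V) (p q : ℕ) (Y : Set V)
    (hY : Y = {y : V | ExpEq f y 2 ∧ HeightEq f y p ∧ HeightEq f (f y) q}) :
    Chinv f (⨆ y ∈ Y, cyc f y) := by
  set X := ⨆ y ∈ Y, cyc f y with hX
  have hle : ∀ y ∈ Y, cyc f y ≤ X := fun y hy => le_iSup₂ (f := fun y _ => cyc f y) y hy
  constructor
  · rw [hX, Submodule.map_iSup]
    refine iSup_le fun y => ?_
    rw [Submodule.map_iSup]
    refine iSup_le fun hy => le_trans (cyc_map_f_le f y) (hle y hy)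
  · intro α hcomm
    have key : ∀ (β : V ≃ₗ[K] V), (β : V →ₗ[K] V) ∘ₗ f = f ∘ₗ (β : V →ₗ[K] V) →
        X.map (β : V →ₗ[K] V) ≤ X := by
      intro β hβ
      rw [hX, Submodule.map_iSup]
      refine iSup_le fun y => ?_
      rw [Submodule.map_iSup]
      refine iSup_le fun hy => ?_
      have hyY : β y ∈ Y := by
        rw [hY] at hy ⊢
        exact alpha_mem_Y hβ hy
      refine le_trans ?_ (hle (β y) hyY)
      rw [cyc, Submodule.map_span_le]
      rintro m ⟨i, rfl⟩
      rw [comm_pow hβ i y]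
      exact fpow_mem_cyc f (β y) i
    refine le_antisymm (key α hcomm) ?_
    have h2 := Submodule.map_mono (f := (α : V →ₗ[K] V)) (key α.symm (symm_comm hcomm))
    rw [← Submodule.map_comp] at h2
    have hid : (α : V →ₗ[K] V) ∘ₗ (α.symm : V →ₗ[K] V) = LinearMap.id := by
      ext v; simp
    rw [hid, Submodule.map_id] at h2
    exact h2

lemma one_dim {V : Type*} [AddCommGroup V] [Module (ZMod 2) V]
    [FiniteDimensional (ZMod 2) V] (A B : Submodule (ZMod 2) V) (hBA : B ≤ A)
    (h : Module.finrank (ZMod 2) ↥A - Module.finrank (ZMod 2) ↥B = 1) :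
    (∃ x, x ∈ A ∧ x ∉ B) ∧
      (∀ x y, x ∈ A → x ∉ B → y ∈ A → y ∉ B → x - y ∈ B) := by
  set B' : Submodule (ZMod 2) ↥A := B.comap A.subtype with hB'
  have hfB : Module.finrank (ZMod 2) ↥B' = Module.finrank (ZMod 2) ↥B :=
    (Submodule.comapSubtypeEquivOfLe hBA).finrank_eq
  have hq : Module.finrank (ZMod 2) (↥A ⧸ B') = 1 := by
    have := B'.finrank_quotient_add_finrank
    omega
  obtain ⟨v, hv0, hvs⟩ := finrank_eq_one_iff'.mp hq
  have key : ∀ x (hx : x ∈ A), x ∉ B → Submodule.Quotient.mk (p := B') ⟨x, hx⟩ = v := by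
    intro x hx hxB
    obtain ⟨c, hc⟩ := hvs (Submodule.Quotient.mk ⟨x, hx⟩)
    rcases zmod2_cases c with rfl | rfl
    · rw [zero_smul] at hc
      exact absurd (by simpa [hB'] using (Submodule.Quotient.mk_eq_zero B').mp hc.symm) hxB
    · rw [one_smul] at hc; exact hc.symm
  constructor
  · have hne : B ≠ A := fun hEq => by rw [hEq] at h; omega
    obtain ⟨x, hxA, hxB⟩ := SetLike.exists_of_lt (lt_of_le_of_ne hBA hne)
    exact ⟨x, hxA, hxB⟩
  · intro x y hxA hxB hyA hyB
    have : Submodule.Quotient.mk (p := B') (⟨x, hxA⟩ - ⟨y, hyA⟩) = 0 := by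
      rw [Submodule.Quotient.mk_sub, key x hxA hxB, key y hyA hyB, sub_self]
    simpa [hB'] using (Submodule.Quotient.mk_eq_zero B').mp this

end auxlemmas

section decomp
open Polynomial Module DirectSum

lemma exists_decomp {V : Type*} [AddCommGroup V] [Module (ZMod 2) V]
    [FiniteDimensional (ZMod 2) V] (f : V →ₗ[ZMod 2] V) (hf : IsNilpotent f) :
    ∃ (ι : Type) (_ : Fintype ι) (π : ι → (V →ₗ[ZMod 2] V)) (e : ι → ℕ),
      (∀ i, (π i) ∘ₗ f = f ∘ₗ (π i)) ∧
      (∀ i x, π i (π i x) = π i x) ∧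
      (∀ x, ∑ i, π i x = x) ∧
      (∀ i x, (f ^ (e i)) (π i x) = 0) ∧
      (∀ i x, f (π i x) = 0 → π i x ∈ LinearMap.range (f ^ (e i - 1))) := by
  classical
  obtain ⟨n, hn⟩ := hf
  have hXn : ∀ m : Module.AEval' f, ((X : (ZMod 2)[X]) ^ n) • m = 0 := by
    intro m
    apply (Module.AEval'.of f).symm.injective
    rw [Module.AEval.of_symm_smul, map_zero, map_pow, aeval_X, hn]
    exact rfl
  have htors : Module.IsTorsion (ZMod 2)[X] (Module.AEval' f) := fun m =>
    ⟨⟨X ^ n, mem_nonZeroDivisors_of_ne_zero (pow_ne_zero _ X_ne_zero)⟩, hXn m⟩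
  obtain ⟨ι, hfin, p, hp, e, ⟨q⟩⟩ := Module.equiv_directSum_of_isTorsion htors
  set Qi : ι → Type _ := fun i => (ZMod 2)[X] ⧸ ((ZMod 2)[X] ∙ (p i ^ e i)) with hQi
  set P : ι → (Module.AEval' f →ₗ[(ZMod 2)[X]] Module.AEval' f) := fun i =>
    q.symm.toLinearMap ∘ₗ (lof (ZMod 2)[X] ι Qi i ∘ₗ component (ZMod 2)[X] ι Qi i) ∘ₗ
      q.toLinearMap with hP
  set of := Module.AEval'.of f with hof
  set π : ι → (V →ₗ[ZMod 2] V) := fun i =>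
    (of.symm.toLinearMap ∘ₗ ((P i).restrictScalars (ZMod 2))) ∘ₗ of.toLinearMap with hπ
  have hπ_apply : ∀ i x, π i x = of.symm (P i (of x)) := fun i x => rfl
  have hq_P : ∀ i m, q (P i m) = lof (ZMod 2)[X] ι Qi i (component (ZMod 2)[X] ι Qi i (q m)) := by
    intro i m
    simp only [hP, LinearMap.coe_comp, Function.comp_apply, LinearEquiv.coe_coe]
    rw [q.apply_symm_apply]
  have hsmul_pow : ∀ (k : ℕ) (m : Module.AEval' f),
      of.symm (((X : (ZMod 2)[X]) ^ k) • m) = (f ^ k) (of.symm m) := by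
    intro k m
    rw [Module.AEval.of_symm_smul, map_pow, aeval_X]
    rfl
  have hspan : ∀ i, ((ZMod 2)[X] ∙ (p i ^ e i)) = ((ZMod 2)[X] ∙ ((X : (ZMod 2)[X]) ^ e i)) := by
    intro i
    rcases Nat.eq_zero_or_pos (e i) with he | he
    · rw [he, pow_zero, pow_zero]
    · have hmem : (X : (ZMod 2)[X]) ^ n ∈ ((ZMod 2)[X] ∙ (p i ^ e i)) := by
        have h0 : ((X : (ZMod 2)[X]) ^ n) •
            (Submodule.Quotient.mk (1 : (ZMod 2)[X]) : Qi i) = 0 := by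
          have h1 : ((X : (ZMod 2)[X]) ^ n) •
              (q.symm (lof (ZMod 2)[X] ι Qi i (Submodule.Quotient.mk 1))) = 0 := hXn _
          have h2 := congrArg q h1
          rw [map_smul, q.apply_symm_apply, map_zero, ← map_smul] at h2
          have h3 := congrArg (component (ZMod 2)[X] ι Qi i) h2
          rw [component.lof_self, map_zero] at h3
          exact h3
        rw [← Submodule.Quotient.mk_smul, smul_eq_mul, mul_one] at h0
        exact (Submodule.Quotient.mk_eq_zero _).mp h0
      obtain ⟨c, hc⟩ := Submodule.mem_span_singleton.mp hmem
      have hdvd : p i ^ e i ∣ (X : (ZMod 2)[X]) ^ n := ⟨c, by rw [← hc, smul_eq_mul, mul_comm]⟩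
      have hpdvd : p i ∣ (X : (ZMod 2)[X]) ^ n :=
        dvd_trans (dvd_pow_self (p i) he.ne') hdvd
      have hprime : Prime (p i) := (hp i).prime
      have hpX : p i ∣ (X : (ZMod 2)[X]) := hprime.dvd_of_dvd_pow hpdvd
      have hassoc : Associated (p i) (X : (ZMod 2)[X]) :=
        (hp i).associated_of_dvd Polynomial.irreducible_X hpX
      exact Ideal.span_singleton_eq_span_singleton.mpr hassoc.pow_pow
  refine ⟨ι, hfin, π, e, ?_, ?_, ?_, ?_, ?_⟩
  · intro i
    ext x
    simp only [LinearMap.comp_apply]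
    rw [hπ_apply, hπ_apply]
    have h1 : of (f x) = (X : (ZMod 2)[X]) • of x := (Module.AEval'.X_smul_of f x).symm
    rw [h1, map_smul, Module.AEval.of_symm_X_smul]
    rfl
  · intro i x
    rw [hπ_apply, hπ_apply, of.apply_symm_apply]
    congr 1
    apply q.injective
    rw [hq_P, hq_P, component.lof_self]
  · intro x
    have h1 : ∑ i, P i (of x) = of x := by
      have h2 : ∑ i, lof (ZMod 2)[X] ι Qi i (component (ZMod 2)[X] ι Qi i (q (of x)))
          = q (of x) := by
        simp only [lof_eq_of, ← apply_eq_component]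
        exact DirectSum.sum_univ_of _
      calc ∑ i, P i (of x) = q.symm (∑ i, lof (ZMod 2)[X] ι Qi i
            (component (ZMod 2)[X] ι Qi i (q (of x)))) := by
              rw [map_sum]
              exact Finset.sum_congr rfl fun i _ => by rw [← hq_P, q.symm_apply_apply]
        _ = of x := by rw [h2, q.symm_apply_apply]
    calc ∑ i, π i x = of.symm (∑ i, P i (of x)) := by
          rw [map_sum]
          exact Finset.sum_congr rfl fun i _ => (hπ_apply i x)
      _ = x := by rw [h1, of.symm_apply_apply]
  · intro i x
    have hkill : ((X : (ZMod 2)[X]) ^ e i) • P i (of x) = 0 := by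
      apply q.injective
      rw [map_smul, map_zero, hq_P, ← map_smul]
      obtain ⟨r, hr⟩ := Submodule.Quotient.mk_surjective _ (component (ZMod 2)[X] ι Qi i (q (of x)))
      rw [← hr, ← Submodule.Quotient.mk_smul]
      have : ((X : (ZMod 2)[X]) ^ e i • r) ∈ ((ZMod 2)[X] ∙ (p i ^ e i)) := by
        rw [hspan i, smul_eq_mul]
        exact Submodule.mem_span_singleton.mpr ⟨r, by rw [smul_eq_mul, mul_comm]⟩
      rw [(Submodule.Quotient.mk_eq_zero _).mpr this, map_zero]
    rw [hπ_apply, ← hsmul_pow, hkill, map_zero]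
  · intro i x hx
    rw [hπ_apply] at hx ⊢
    have hX0 : (X : (ZMod 2)[X]) • P i (of x) = 0 := by
      apply of.symm.injective
      rw [Module.AEval.of_symm_X_smul, map_zero]
      exact hx
    have hc0 : (X : (ZMod 2)[X]) • (component (ZMod 2)[X] ι Qi i (q (of x))) = 0 := by
      have h2 := congrArg q hX0
      rw [map_smul, map_zero, hq_P, ← map_smul] at h2
      have h3 := congrArg (component (ZMod 2)[X] ι Qi i) h2
      rw [component.lof_self, map_zero] at h3
      exact h3
    rcases Nat.eq_zero_or_pos (e i) with he | he
    · exact ⟨of.symm (P i (of x)), by rw [he]; simp⟩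
    · obtain ⟨d, hd⟩ : ∃ d, e i = d + 1 := ⟨e i - 1, by omega⟩
      rw [show e i - 1 = d from by omega]
      obtain ⟨r, hr⟩ := Submodule.Quotient.mk_surjective _ (component (ZMod 2)[X] ι Qi i (q (of x)))
      rw [← hr, ← Submodule.Quotient.mk_smul] at hc0
      have hmem := (Submodule.Quotient.mk_eq_zero _).mp hc0
      rw [hspan i, hd] at hmem
      obtain ⟨s, hs⟩ := Submodule.mem_span_singleton.mp hmem
      have hr' : r = (X : (ZMod 2)[X]) ^ d * s := by
        have hs' : s * (X : (ZMod 2)[X]) ^ (d + 1) = X * r := by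
          rw [← smul_eq_mul, hs, smul_eq_mul]
        have h4 : (X : (ZMod 2)[X]) * r = X * ((X : (ZMod 2)[X]) ^ d * s) := by
          rw [← hs', pow_succ]; ring
        exact mul_left_cancel₀ Polynomial.X_ne_zero h4
      have hcc : (component (ZMod 2)[X] ι Qi i (q (of x)))
          = ((X : (ZMod 2)[X]) ^ d) • (Submodule.Quotient.mk s : Qi i) := by
        rw [← hr, hr', ← Submodule.Quotient.mk_smul, smul_eq_mul]
      have hPm : P i (of x) = ((X : (ZMod 2)[X]) ^ d) •
          q.symm (lof (ZMod 2)[X] ι Qi i (Submodule.Quotient.mk s)) := by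
        apply q.injective
        rw [hq_P, map_smul, q.apply_symm_apply, ← map_smul, hcc]
      refine ⟨of.symm (q.symm (lof (ZMod 2)[X] ι Qi i (Submodule.Quotient.mk s))), ?_⟩
      rw [hPm, hsmul_pow]

end decomp

theorem stmt16 {V : Type*} [AddCommGroup V] [Module (ZMod 2) V]
    [FiniteDimensional (ZMod 2) V] (f : V →ₗ[ZMod 2] V) (hf : IsNilpotent f)
    (aρ aτ : ℕ) (hρ1 : 1 ≤ aρ) (hρτ : aτ > aρ + 1)
    (hdρ : ulm f aρ = 1) (hdτ : ulm f aτ = 1)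
    (Y : Set V)
    (hY : Y = {y : V | ExpEq f y 2 ∧ HeightEq f y (aρ - 1) ∧ HeightEq f (f y) (aτ - 1)}) :
    Chinv f (⨆ y ∈ Y, cyc f y) ∧ ¬ Hinv f (⨆ y ∈ Y, cyc f y) := by
  refine ⟨chinv_part f (aρ - 1) (aτ - 1) Y hY, ?_⟩
  intro hHinv
  obtain ⟨ι, hfin, π, e, hcomm, hidem, hsum, hkill, hker⟩ := exists_decomp f hf
  have hτ1 : aτ - 1 + 1 = aτ := by omega
  have hτ2 : aτ - 2 + 1 = aτ - 1 := by omega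
  have hρ0 : aρ - 1 + 1 = aρ := by omega
  have hcomm_pow : ∀ i (j : ℕ) x, π i ((f ^ j) x) = (f ^ j) (π i x) :=
    fun i j x => comm_pow (hcomm i) j x
  have hcomm1 : ∀ i x, π i (f x) = f (π i x) := by
    intro i x
    have := hcomm_pow i 1 x
    simpa using this
  have hpow1 : ∀ (m : ℕ) (x : V), (f ^ (m + 1)) x = f ((f ^ m) x) := fun m x => by
    rw [pow_succ', Module.End.mul_apply]
  have hpow_add : ∀ (m₁ m₂ : ℕ) (x : V), (f ^ (m₁ + m₂)) x = (f ^ m₁) ((f ^ m₂) x) :=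
    fun m₁ m₂ x => by rw [pow_add, Module.End.mul_apply]
  -- the two Ulm-invariant facts
  obtain ⟨⟨ku, hkuA, hkuB⟩, conρ⟩ := one_dim
    (LinearMap.ker f ⊓ LinearMap.range (f ^ (aρ - 1)))
    (LinearMap.ker f ⊓ LinearMap.range (f ^ aρ))
    (inf_le_inf_left _ (range_pow_le f (by omega))) hdρ
  obtain ⟨⟨kw, hkwA, hkwB⟩, conτ⟩ := one_dim
    (LinearMap.ker f ⊓ LinearMap.range (f ^ (aτ - 1)))
    (LinearMap.ker f ⊓ LinearMap.range (f ^ aτ))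
    (inf_le_inf_left _ (range_pow_le f (by omega))) hdτ
  rw [Submodule.mem_inf] at hkuA hkwA
  obtain ⟨hkuK, hkuR⟩ := hkuA
  obtain ⟨hkwK, hkwR⟩ := hkwA
  have hkuK' : f ku = 0 := LinearMap.mem_ker.mp hkuK
  have hkwK' : f kw = 0 := LinearMap.mem_ker.mp hkwK
  -- choose the block i₀
  obtain ⟨v, hv⟩ := hkwR
  have hexists : ∃ i, (f ^ (aτ - 1)) (π i v) ∉ LinearMap.range (f ^ aτ) := by
    by_contra hall
    push_neg at hall
    have hmem : kw ∈ LinearMap.range (f ^ aτ) := by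
      rw [← hv]
      have h6 : (f ^ (aτ - 1)) v = ∑ i, (f ^ (aτ - 1)) (π i v) := by
        conv_lhs => rw [← hsum v]
        rw [map_sum]
      rw [h6]
      exact Submodule.sum_mem _ fun i _ => hall i
    exact hkwB (Submodule.mem_inf.mpr ⟨hkwK, hmem⟩)
  obtain ⟨i₀, hi₀⟩ := hexists
  set w := π i₀ v with hw
  set k := (f ^ (aτ - 1)) w with hk
  have hkR : k ∈ LinearMap.range (f ^ (aτ - 1)) := ⟨w, rfl⟩
  have hkNot : k ∉ LinearMap.range (f ^ aτ) := hi₀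
  have hk0 : k ≠ 0 := fun h => hkNot (h ▸ Submodule.zero_mem _)
  have hfv : (f ^ aτ) v = 0 := by
    rw [← hτ1, hpow1, hv, hkwK']
  have hfw : (f ^ aτ) w = 0 := by rw [hw, ← hcomm_pow, hfv, map_zero]
  have hfk : f k = 0 := by
    rw [hk, ← hpow1, hτ1, hfw]
  have hkA : k ∈ LinearMap.ker f ⊓ LinearMap.range (f ^ (aτ - 1)) :=
    Submodule.mem_inf.mpr ⟨LinearMap.mem_ker.mpr hfk, hkR⟩
  have hkB : k ∉ LinearMap.ker f ⊓ LinearMap.range (f ^ aτ) :=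
    fun h => hkNot (Submodule.mem_inf.mp h).2
  -- the block has size at least aτ
  have hei : aτ ≤ e i₀ := by
    by_contra hlt
    push_neg at hlt
    have hkillw : (f ^ (e i₀)) w = 0 := hkill i₀ v
    obtain ⟨m, hm⟩ : ∃ m, aτ - 1 = m + e i₀ := ⟨aτ - 1 - e i₀, by omega⟩
    have hzero : k = 0 := by
      rw [hk, hm, hpow_add, hkillw, map_zero]
    exact hk0 hzero
  have hWker : ∀ z, f (π i₀ z) = 0 → π i₀ z ∈ LinearMap.range (f ^ (aτ - 1)) := by
    intro z hz
    exact range_pow_le f (by omega) (hker i₀ z hz)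
  -- construct c and y₀
  set a := π i₀ ku with ha
  have hfa : f a = 0 := by rw [ha, ← hcomm1, hkuK', map_zero]
  have haR : a ∈ LinearMap.range (f ^ (aτ - 1)) := hWker ku hfa
  have haRρ : a ∈ LinearMap.range (f ^ aρ) := range_pow_le f (by omega) haR
  set c := ku - a with hc
  have hfc : f c = 0 := by rw [hc, map_sub, hkuK', hfa, sub_zero]
  have hcR : c ∈ LinearMap.range (f ^ (aρ - 1)) :=
    Submodule.sub_mem _ hkuR (range_pow_le f (by omega) haR)
  have hcNot : c ∉ LinearMap.range (f ^ aρ) := by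
    intro hmem
    apply hkuB
    refine Submodule.mem_inf.mpr ⟨hkuK, ?_⟩
    have h8 : ku = c + a := by rw [hc]; abel
    rw [h8]
    exact Submodule.add_mem _ hmem haRρ
  have hπc : π i₀ c = 0 := by rw [hc, map_sub, ha, hidem i₀ ku, sub_self]
  set y₀ := c + (f ^ (aτ - 2)) w with hy₀
  have hfy₀ : f y₀ = k := by
    rw [hy₀, map_add, hfc, zero_add]
    rw [← hpow1, hτ2, hk]
  have hπw : π i₀ w = w := by rw [hw]; exact hidem i₀ v
  have hπy₀ : π i₀ y₀ = (f ^ (aτ - 2)) w := by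
    rw [hy₀, map_add, hπc, zero_add, hcomm_pow, hπw]
  have hwR2 : (f ^ (aτ - 2)) w ∈ LinearMap.range (f ^ (aτ - 2)) := ⟨w, rfl⟩
  have hf2y₀ : (f ^ 2) y₀ = 0 := by
    rw [pow_two, Module.End.mul_apply, hfy₀, hfk]
  have hy₀ne : y₀ ≠ 0 := by
    intro h0
    apply hk0
    rw [← hfy₀, h0, map_zero]
  have hy₀R : y₀ ∈ LinearMap.range (f ^ (aρ - 1)) :=
    Submodule.add_mem _ hcR (range_pow_le f (by omega) hwR2)
  have hy₀Not : y₀ ∉ LinearMap.range (f ^ aρ) := by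
    intro hmem
    apply hcNot
    have h10 : c = y₀ - (f ^ (aτ - 2)) w := by rw [hy₀]; abel
    rw [h10]
    exact Submodule.sub_mem _ hmem (range_pow_le f (by omega) hwR2)
  have hy₀Y : y₀ ∈ Y := by
    rw [hY]
    refine ⟨⟨hf2y₀, ?_⟩, ⟨hy₀R, ?_⟩, ⟨?_, ?_⟩⟩
    · intro j hj
      interval_cases j
      · simpa using hy₀ne
      · simpa [pow_one] using (by rw [hfy₀]; exact hk0 : f y₀ ≠ 0)
    · rw [hρ0]; exact hy₀Not
    · rw [hfy₀]; exact hkR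
    · rw [hτ1, hfy₀]; exact hkNot
  -- the bounding subspace Z
  set F := LinearMap.range (f ^ aρ) ⊓
    Submodule.comap f (LinearMap.ker f ⊓ LinearMap.range (f ^ aτ)) with hF
  set Z := Submodule.span (ZMod 2) {y₀} ⊔ F with hZ
  have hy₀Z : y₀ ∈ Z := Submodule.mem_sup_left (Submodule.mem_span_singleton_self y₀)
  have hXZ : (⨆ y ∈ Y, cyc f y) ≤ Z := by
    refine iSup_le fun y => iSup_le fun hy => ?_
    have hyY := hy
    rw [hY] at hyY
    obtain ⟨⟨hye2, hyne⟩, ⟨hyR, hyNot⟩, ⟨hfyR, hfyNot⟩⟩ := hyY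
    rw [hρ0] at hyNot
    rw [hτ1] at hfyNot
    have hffy : f (f y) = 0 := by
      have h11 : (f ^ 2) y = f (f y) := by rw [pow_two, Module.End.mul_apply]
      rw [← h11, hye2]
    have hfyA : f y ∈ LinearMap.ker f ⊓ LinearMap.range (f ^ (aτ - 1)) :=
      Submodule.mem_inf.mpr ⟨LinearMap.mem_ker.mpr hffy, hfyR⟩
    have hfyB : f y ∉ LinearMap.ker f ⊓ LinearMap.range (f ^ aτ) :=
      fun h => hfyNot (Submodule.mem_inf.mp h).2
    have hdiff1 : f y - k ∈ LinearMap.ker f ⊓ LinearMap.range (f ^ aτ) :=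
      conτ (f y) k hfyA hfyB hkA hkB
    -- the κ argument
    obtain ⟨z, hz⟩ := range_pow_le f (show aρ + 1 ≤ aτ - 1 by omega) hfyR
    obtain ⟨z₀, hz₀⟩ := range_pow_le f (show aρ + 1 ≤ aτ - 1 by omega) hkR
    have hstep : ∀ u : V, f ((f ^ aρ) u) = (f ^ (aρ + 1)) u := by
      intro u
      rw [pow_succ', Module.End.mul_apply]
    have hκ : ∀ (yy zz : V), f yy = (f ^ (aρ + 1)) zz →
        yy ∈ LinearMap.range (f ^ (aρ - 1)) → yy ∉ LinearMap.range (f ^ aρ) →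
        (yy - (f ^ aρ) zz ∈ LinearMap.ker f ⊓ LinearMap.range (f ^ (aρ - 1)) ∧
         yy - (f ^ aρ) zz ∉ LinearMap.ker f ⊓ LinearMap.range (f ^ aρ)) := by
      intro yy zz hfyy hyyR hyyNot
      constructor
      · refine Submodule.mem_inf.mpr ⟨LinearMap.mem_ker.mpr ?_, ?_⟩
        · rw [map_sub, hstep, hfyy, sub_self]
        · exact Submodule.sub_mem _ hyyR (range_pow_le f (by omega) ⟨zz, rfl⟩)
      · intro hmem
        apply hyyNot
        have h12 : yy = (yy - (f ^ aρ) zz) + (f ^ aρ) zz := by abel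
        rw [h12]
        exact Submodule.add_mem _ (Submodule.mem_inf.mp hmem).2 ⟨zz, rfl⟩
    obtain ⟨hκ1A, hκ1B⟩ := hκ y z hz.symm hyR hyNot
    obtain ⟨hκ2A, hκ2B⟩ := hκ y₀ z₀ (by rw [hfy₀, hz₀]) hy₀R hy₀Not
    have hdρmem := conρ _ _ hκ1A hκ1B hκ2A hκ2B
    have hdR : y - y₀ ∈ LinearMap.range (f ^ aρ) := by
      have h13 : y - y₀ = ((y - (f ^ aρ) z) - (y₀ - (f ^ aρ) z₀)) + (f ^ aρ) (z - z₀) := by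
        rw [map_sub]; abel
      rw [h13]
      exact Submodule.add_mem _ (Submodule.mem_inf.mp hdρmem).2 ⟨z - z₀, rfl⟩
    have hdF : y - y₀ ∈ F := by
      refine Submodule.mem_inf.mpr ⟨hdR, ?_⟩
      rw [Submodule.mem_comap, map_sub, hfy₀]
      exact hdiff1
    refine cyc_le_of_mem fun i => ?_
    match i with
    | 0 =>
        simp only [pow_zero, Module.End.one_apply]
        have h14 : y = y₀ + (y - y₀) := by abel
        rw [h14]
        exact Submodule.add_mem _ hy₀Z (Submodule.mem_sup_right hdF)
    | 1 =>
        simp only [pow_one]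
        refine Submodule.mem_sup_right (Submodule.mem_inf.mpr ⟨range_pow_le f (by omega) hfyR, ?_⟩)
        rw [Submodule.mem_comap, hffy]
        exact Submodule.zero_mem _
    | (j+2) =>
        have h16 : (f ^ (j + 2)) y = (f ^ j) ((f ^ 2) y) := by
          rw [← hpow_add]
        rw [h16, hye2, map_zero]
        exact Z.zero_mem
  -- contradiction
  have hy₀X : y₀ ∈ ⨆ y ∈ Y, cyc f y :=
    (le_iSup₂ (f := fun y _ => cyc f y) y₀ hy₀Y) (mem_cyc_self f y₀)
  have hπy₀X : π i₀ y₀ ∈ ⨆ y ∈ Y, cyc f y :=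
    hHinv (π i₀) (hcomm i₀) ⟨y₀, hy₀X, rfl⟩
  have hπy₀Z : (f ^ (aτ - 2)) w ∈ Z := by
    rw [← hπy₀]
    exact hXZ hπy₀X
  rw [hZ] at hπy₀Z
  obtain ⟨s, hs, d, hd, hsd⟩ := Submodule.mem_sup.mp hπy₀Z
  obtain ⟨ε, rfl⟩ := Submodule.mem_span_singleton.mp hs
  have hfd2 : f ((f ^ (aτ - 2)) w) = k := by
    rw [← Module.End.mul_apply, ← pow_succ', hτ2, hk]
  rcases zmod2_cases ε with rfl | rfl
  · rw [zero_smul, zero_add] at hsd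
    subst hsd
    have := (Submodule.mem_inf.mp hd).2
    rw [Submodule.mem_comap, hfd2] at this
    exact hkNot (Submodule.mem_inf.mp this).2
  · rw [one_smul] at hsd
    have hdc : d = -c := by
      have h17 : c + (f ^ (aτ - 2)) w + d = (f ^ (aτ - 2)) w := by
        rw [← hy₀]; exact hsd
      have h18 : c + d = 0 := by
        have h18' : c + d = (c + (f ^ (aτ - 2)) w + d) - (f ^ (aτ - 2)) w := by abel
        rw [h17, sub_self] at h18'
        exact h18'
      exact eq_neg_of_add_eq_zero_right h18
    rw [hdc] at hd
    have hcF : c ∈ F := (neg_mem_iff).mp hd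
    exact hcNot (Submodule.mem_inf.mp hcF).1
end

section
/- Let f be nilpotent on V over any field, U = (u_1,…,u_k) a generator tuple with exponents t_1 ≤ ⋯ ≤ t_k, and r = (r_1,…,r_k) an admissible tuple (0 ≤ r_i ≤ t_i). Then the marked subspace W(r, U) = ⟨f^{r_1}u_1⟩ ⊕ ⋯ ⊕ ⟨f^{r_k}u_k⟩ is hyperinvariant if and only if r_1 ≤ ⋯ ≤ r_k and t_1 − r_1 ≤ ⋯ ≤ t_k − r_k. -/
open LinearMap

variable {K : Type*} [Field K] {V : Type*} [AddCommGroup V] [Module K V]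

/-! ### Auxiliary lemmas -/

section aux
variable (f : V →ₗ[K] V)

lemma pow_pow_apply (x : V) (a b : ℕ) : (f ^ a) ((f ^ b) x) = (f ^ (a + b)) x := by
  rw [← Module.End.mul_apply, ← pow_add]

lemma apply_pow_apply (x : V) (m : ℕ) : f ((f ^ m) x) = (f ^ (m + 1)) x := by
  rw [pow_succ', Module.End.mul_apply]

lemma pow_apply_eq_zero {x : V} {ℓ : ℕ} (hx : (f ^ ℓ) x = 0) {m : ℕ} (h : ℓ ≤ m) :
    (f ^ m) x = 0 := by
  have : m = (m - ℓ) + ℓ := by omega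
  rw [this, ← pow_pow_apply, hx, map_zero]

lemma pow_mem_cyc (x : V) (m : ℕ) : (f ^ m) x ∈ cyc f x :=
  Submodule.subset_span ⟨m, rfl⟩

lemma self_mem_cyc (x : V) : x ∈ cyc f x := by
  have := pow_mem_cyc f x 0
  rwa [pow_zero, Module.End.one_apply] at this

lemma cyc_map_pow_le (x : V) (m : ℕ) : (cyc f x).map (f ^ m) ≤ cyc f ((f ^ m) x) := by
  rw [cyc, Submodule.map_span, Submodule.span_le]
  rintro _ ⟨_, ⟨s, rfl⟩, rfl⟩
  show (f ^ m) ((f ^ s) x) ∈ _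
  rw [pow_pow_apply, Nat.add_comm, ← pow_pow_apply]
  exact Submodule.subset_span ⟨s, rfl⟩

lemma pow_apply_mem_cyc_pow {x v : V} {a : ℕ} (hv : v ∈ cyc f ((f ^ a) x)) (m : ℕ) :
    (f ^ m) v ∈ cyc f ((f ^ (a + m)) x) := by
  have h1 : (f ^ m) v ∈ (cyc f ((f ^ a) x)).map (f ^ m) := ⟨v, hv, rfl⟩
  have h2 := cyc_map_pow_le f ((f ^ a) x) m h1
  rwa [pow_pow_apply, Nat.add_comm m a] at h2

lemma cyc_pow_le_cyc_pow (x : V) {a b : ℕ} (h : b ≤ a) :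
    cyc f ((f ^ a) x) ≤ cyc f ((f ^ b) x) := by
  rw [cyc, Submodule.span_le]
  rintro _ ⟨m, rfl⟩
  show (f ^ m) ((f ^ a) x) ∈ _
  rw [pow_pow_apply]
  have h2 : m + a = (m + (a - b)) + b := by omega
  rw [h2, ← pow_pow_apply]
  exact pow_mem_cyc f _ _

lemma cyc_pow_le_cyc (x : V) (a : ℕ) : cyc f ((f ^ a) x) ≤ cyc f x := by
  have h := cyc_pow_le_cyc_pow f x (Nat.zero_le a)
  rwa [pow_zero, Module.End.one_apply] at h

lemma pow_apply_mem_cyc {x v : V} (hv : v ∈ cyc f x) (m : ℕ) : (f ^ m) v ∈ cyc f x :=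
  cyc_pow_le_cyc f x m (cyc_map_pow_le f x m ⟨v, hv, rfl⟩)

lemma cyc_eq_span {x : V} {ℓ : ℕ} (hx : (f ^ ℓ) x = 0) :
    cyc f x = Submodule.span K (Set.range fun m : Fin ℓ => (f ^ (m : ℕ)) x) := by
  refine le_antisymm ?_ (Submodule.span_le.2 ?_)
  · rw [cyc, Submodule.span_le]
    rintro _ ⟨m, rfl⟩
    show (f ^ m) x ∈ _
    by_cases h : m < ℓ
    · exact Submodule.subset_span ⟨⟨m, h⟩, rfl⟩
    · rw [pow_apply_eq_zero f hx (by omega)]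
      exact Submodule.zero_mem _
  · rintro _ ⟨m, rfl⟩
    exact pow_mem_cyc f x m

lemma li_of_expEq {x : V} {ℓ : ℕ} (h : ExpEq f x ℓ) :
    LinearIndependent K (fun m : Fin ℓ => (f ^ (m : ℕ)) x) := by
  rw [Fintype.linearIndependent_iff]
  intro a ha
  have key : ∀ n : ℕ, ∀ hn : n < ℓ, a ⟨n, hn⟩ = 0 := by
    intro n
    induction n using Nat.strong_induction_on with
    | _ n IH =>
      intro hn
      have h0 : (f ^ (ℓ - 1 - n)) (∑ i : Fin ℓ, a i • (f ^ (i : ℕ)) x) = 0 := by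
        rw [ha, map_zero]
      rw [map_sum] at h0
      have h1 : ∀ i : Fin ℓ, (f ^ (ℓ - 1 - n)) (a i • (f ^ (i : ℕ)) x)
          = a i • (f ^ (ℓ - 1 - n + (i : ℕ))) x := by
        intro i; rw [map_smul, pow_pow_apply]
      rw [Finset.sum_congr rfl fun i _ => h1 i] at h0
      have h2 : ∑ i : Fin ℓ, a i • (f ^ (ℓ - 1 - n + (i : ℕ))) x
          = a ⟨n, hn⟩ • (f ^ (ℓ - 1 - n + n)) x := by
        refine Finset.sum_eq_single (⟨n, hn⟩ : Fin ℓ)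
          ?_ (fun hmem => absurd (Finset.mem_univ _) hmem)
        intro i _ hne
        have hiℓ : (i : ℕ) < ℓ := i.isLt
        rcases lt_or_gt_of_ne (fun hc : (i : ℕ) = n => hne (Fin.ext hc)) with hlt | hgt
        · rw [IH i hlt i.isLt, zero_smul]
        · rw [pow_apply_eq_zero f h.1 (by omega), smul_zero]
      have hexp : ℓ - 1 - n + n = ℓ - 1 := by omega
      rw [h2, hexp] at h0
      rcases smul_eq_zero.1 h0 with h4 | h4
      · exact h4
      · exact absurd h4 (h.2 (ℓ - 1) (by omega))
  intro i
  have := key i i.isLt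
  simpa using this

/-- A basis of the cyclic subspace generated by a vector of exponent `ℓ`. -/
noncomputable def cycBasis {x : V} {ℓ : ℕ} (h : ExpEq f x ℓ) : Module.Basis (Fin ℓ) K ↥(cyc f x) := by
  refine Module.Basis.mk (v := fun m : Fin ℓ => ⟨(f ^ (m : ℕ)) x, pow_mem_cyc f x m⟩) ?_ ?_
  · have hli := li_of_expEq f h
    have hcomp : (fun m : Fin ℓ => (f ^ (m : ℕ)) x)
        = (cyc f x).subtype ∘ (fun m : Fin ℓ =>
          (⟨(f ^ (m : ℕ)) x, pow_mem_cyc f x m⟩ : ↥(cyc f x))) := rfl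
    rw [hcomp] at hli
    exact hli.of_comp _
  · rintro ⟨y, hy⟩ -
    have hset : (cyc f x).subtype '' (Set.range fun m : Fin ℓ =>
          (⟨(f ^ (m : ℕ)) x, pow_mem_cyc f x m⟩ : ↥(cyc f x)))
        = Set.range fun m : Fin ℓ => (f ^ (m : ℕ)) x := by
      ext z
      constructor
      · rintro ⟨_, ⟨m, rfl⟩, rfl⟩; exact ⟨m, rfl⟩
      · rintro ⟨m, rfl⟩; exact ⟨_, ⟨m, rfl⟩, rfl⟩
    have hmap : Submodule.map (cyc f x).subtype
        (Submodule.span K (Set.range fun m : Fin ℓ =>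
          (⟨(f ^ (m : ℕ)) x, pow_mem_cyc f x m⟩ : ↥(cyc f x)))) = cyc f x := by
      rw [Submodule.map_span, hset]
      exact (cyc_eq_span f h.1).symm
    have hy2 : y ∈ Submodule.map (cyc f x).subtype
        (Submodule.span K (Set.range fun m : Fin ℓ =>
          (⟨(f ^ (m : ℕ)) x, pow_mem_cyc f x m⟩ : ↥(cyc f x)))) := hmap.symm ▸ hy
    rcases hy2 with ⟨w, hw, hwy⟩
    have hweq : w = ⟨y, hy⟩ := Subtype.ext hwy
    rwa [hweq] at hw

@[simp] lemma cycBasis_apply {x : V} {ℓ : ℕ} (h : ExpEq f x ℓ) (m : Fin ℓ) :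
    (cycBasis f h m : V) = (f ^ (m : ℕ)) x := by
  rw [cycBasis, Module.Basis.coe_mk]

lemma mem_cyc_pow_of_pow_eq_zero {x v : V} {ℓ : ℕ} (h : ExpEq f x ℓ)
    (hv : v ∈ cyc f x) {s : ℕ} (hs : (f ^ s) v = 0) :
    v ∈ cyc f ((f ^ (ℓ - s)) x) := by
  rcases Nat.le_total ℓ s with hls | hls
  · have : ℓ - s = 0 := by omega
    rw [this, pow_zero, Module.End.one_apply]
    exact hv
  rw [cyc_eq_span f h.1] at hv
  rcases (Submodule.mem_span_range_iff_exists_fun K).1 hv with ⟨a, hav⟩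
  set A : ℕ → K := fun m => if hm : m < ℓ then a ⟨m, hm⟩ else 0 with hA
  have hvA : v = ∑ m ∈ Finset.range ℓ, A m • (f ^ m) x := by
    rw [← hav, ← Fin.sum_univ_eq_sum_range (fun m => A m • (f ^ m) x) ℓ]
    refine Finset.sum_congr rfl fun i _ => ?_
    simp [hA, i.isLt]
  have hfs : ∑ m ∈ Finset.range ℓ, A m • (f ^ (s + m)) x = 0 := by
    rw [← hs, hvA, map_sum]
    refine Finset.sum_congr rfl fun m _ => ?_
    rw [map_smul, pow_pow_apply]
  have hsplit : ∑ m ∈ Finset.range (ℓ - s), A m • (f ^ (s + m)) x = 0 := by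
    have h1 : ∑ m ∈ Finset.range (ℓ - s), A m • (f ^ (s + m)) x
        + ∑ m ∈ Finset.Ico (ℓ - s) ℓ, A m • (f ^ (s + m)) x
        = ∑ m ∈ Finset.range ℓ, A m • (f ^ (s + m)) x := by
      rw [Finset.range_eq_Ico, Finset.range_eq_Ico]
      exact Finset.sum_Ico_consecutive (fun m => A m • (f ^ (s + m)) x) (Nat.zero_le (ℓ - s)) (Nat.sub_le ℓ s)
    have h2 : ∑ m ∈ Finset.Ico (ℓ - s) ℓ, A m • (f ^ (s + m)) x = 0 := by
      refine Finset.sum_eq_zero fun m hm => ?_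
      rw [Finset.mem_Ico] at hm
      rw [pow_apply_eq_zero f h.1 (by omega), smul_zero]
    rw [← h1, h2, add_zero] at hfs
    exact hfs
  have hGsum : ∑ m' : Fin ℓ,
      (if s ≤ (m' : ℕ) then A ((m' : ℕ) - s) else 0) • (f ^ (m' : ℕ)) x = 0 := by
    rw [Fin.sum_univ_eq_sum_range (fun m' => (if s ≤ m' then A (m' - s) else 0) • (f ^ m') x) ℓ]
    have he1 : ∑ m' ∈ Finset.range ℓ, (if s ≤ m' then A (m' - s) else 0) • (f ^ m') x
        = ∑ m' ∈ (Finset.range ℓ).filter (fun m' => s ≤ m'), A (m' - s) • (f ^ m') x := by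
      rw [Finset.sum_filter]
      refine Finset.sum_congr rfl fun m' _ => ?_
      split <;> simp
    rw [he1]
    have hfil : (Finset.range ℓ).filter (fun m' => s ≤ m') = Finset.Ico s ℓ := by
      ext m'
      simp [Finset.mem_filter, Finset.mem_range, Finset.mem_Ico, and_comm]
    rw [hfil, Finset.sum_Ico_eq_sum_range]
    have he2 : ∑ m ∈ Finset.range (ℓ - s), A (s + m - s) • (f ^ (s + m)) x
        = ∑ m ∈ Finset.range (ℓ - s), A m • (f ^ (s + m)) x := by
      refine Finset.sum_congr rfl fun m _ => ?_
      congr 2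
      omega
    rw [he2]
    exact hsplit
  have hzero := Fintype.linearIndependent_iff.1 (li_of_expEq f h)
    (fun m' : Fin ℓ => if s ≤ (m' : ℕ) then A ((m' : ℕ) - s) else 0) hGsum
  have hAzero : ∀ m < ℓ - s, A m = 0 := by
    intro m hm
    have := hzero ⟨m + s, by omega⟩
    simpa using this
  rw [hvA]
  refine Submodule.sum_mem _ fun m hm => ?_
  rw [Finset.mem_range] at hm
  by_cases hms : m < ℓ - s
  · rw [hAzero m hms, zero_smul]; exact Submodule.zero_mem _
  · refine Submodule.smul_mem _ _ ?_
    have : m = (m - (ℓ - s)) + (ℓ - s) := by omega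
    rw [this, ← pow_pow_apply]
    exact pow_mem_cyc f _ _

variable {k : ℕ} {u : Fin k → V} {t : Fin k → ℕ}
  (hexp : ∀ i, ExpEq f (u i) (t i))
  (hint : DirectSum.IsInternal (fun i => cyc f (u i)))

/-- The collected basis `f^m u_l` of `V`. -/
noncomputable def genBasis : Module.Basis ((l : Fin k) × Fin (t l)) K V :=
  hint.collectedBasis (fun l => cycBasis f (hexp l))

@[simp] lemma genBasis_apply (p : (l : Fin k) × Fin (t l)) :
    genBasis f hexp hint p = (f ^ (p.2 : ℕ)) (u p.1) := by
  rw [genBasis, hint.collectedBasis_coe]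
  exact cycBasis_apply f (hexp p.1) p.2

lemma W_eq_span (r : Fin k → ℕ) :
    (⨆ i, cyc f ((f ^ r i) (u i)))
      = Submodule.span K (genBasis f hexp hint '' {p | r p.1 ≤ (p.2 : ℕ)}) := by
  refine le_antisymm (iSup_le fun i => ?_) (Submodule.span_le.2 ?_)
  · rw [cyc, Submodule.span_le]
    rintro _ ⟨m, rfl⟩
    show (f ^ m) ((f ^ r i) (u i)) ∈ _
    rw [pow_pow_apply]
    by_cases hlt : m + r i < t i
    · refine Submodule.subset_span ⟨⟨i, ⟨m + r i, hlt⟩⟩, by simp, ?_⟩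
      rw [genBasis_apply]
    · rw [pow_apply_eq_zero f (hexp i).1 (by omega)]
      exact Submodule.zero_mem _
  · rintro _ ⟨p, hp, rfl⟩
    rw [genBasis_apply]
    have : (p.2 : ℕ) = ((p.2 : ℕ) - r p.1) + r p.1 := by
      simp only [Set.mem_setOf_eq] at hp; omega
    rw [this, ← pow_pow_apply]
    exact le_iSup (fun i => cyc f ((f ^ r i) (u i))) p.1 (pow_mem_cyc f _ _)

lemma mem_span_block (l : Fin k) {v : V} (hv : v ∈ cyc f (u l)) :
    v ∈ Submodule.span K (genBasis f hexp hint '' {p | p.1 = l}) := by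
  rw [cyc_eq_span f (hexp l).1] at hv
  refine Submodule.span_le.2 ?_ hv
  rintro _ ⟨m, rfl⟩
  refine Submodule.subset_span ⟨⟨l, m⟩, rfl, ?_⟩
  rw [genBasis_apply]

include hexp hint in
lemma components_eq_zero (w : Fin k → V) (hw : ∀ l, w l ∈ cyc f (u l))
    (hsum : ∑ l, w l = 0) : ∀ l, w l = 0 := by
  intro l0
  set B := genBasis f hexp hint with hB
  have hrep : ∀ l, ((B.repr (w l)).support : Set ((l : Fin k) × Fin (t l))) ⊆ {p | p.1 = l} :=
    fun l => B.mem_span_image.1 (mem_span_block f hexp hint l (hw l))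
  have hz : B.repr (w l0) = 0 := by
    ext p
    by_cases hp : p.1 = l0
    · have h0 : B.repr (∑ l, w l) p = 0 := by rw [hsum, map_zero]; rfl
      rw [map_sum, Finsupp.finset_sum_apply] at h0
      have hothers : ∀ l ∈ Finset.univ, l ≠ l0 → B.repr (w l) p = 0 := by
        intro l _ hl
        by_contra hne
        have := hrep l (Finsupp.mem_support_iff.2 hne)
        exact hl (by rw [← this, hp])
      rw [Finset.sum_eq_single l0 hothers (fun hmem => absurd (Finset.mem_univ _) hmem)] at h0
      simpa using h0
    · by_contra hne
      exact hp (hrep l0 (Finsupp.mem_support_iff.2 hne))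
  have := congrArg (B.repr.symm) hz
  simpa using this

include hexp hint in
lemma exists_decomp_s19 (x : V) :
    ∃ w : Fin k → V, (∀ l, w l ∈ cyc f (u l)) ∧ ∑ l, w l = x := by
  set B := genBasis f hexp hint with hB
  refine ⟨fun l => ∑ m : Fin (t l), B.repr x ⟨l, m⟩ • (f ^ (m : ℕ)) (u l),
    fun l => Submodule.sum_mem _ fun m _ => Submodule.smul_mem _ _ (pow_mem_cyc f _ _), ?_⟩
  have h2 : ∑ l, ∑ m : Fin (t l), B.repr x ⟨l, m⟩ • (f ^ (m : ℕ)) (u l)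
      = ∑ p : (l : Fin k) × Fin (t l), B.repr x p • B p := by
    rw [← Finset.univ_sigma_univ, Finset.sum_sigma]
    exact Finset.sum_congr rfl fun l _ => Finset.sum_congr rfl fun m _ => by
      rw [genBasis_apply]
  show ∑ l, ∑ m : Fin (t l), B.repr x ⟨l, m⟩ • (f ^ (m : ℕ)) (u l) = x
  rw [h2]
  exact B.sum_repr x

end aux

lemma comb_iff {k : ℕ} (t r : Fin k → ℕ) (ht : Monotone t) (hr : ∀ i, r i ≤ t i) :
    (∀ i j, r j ≤ r i + (t j - t i)) ↔ (Monotone r ∧ Monotone fun i => t i - r i) := by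
  constructor
  · intro h
    constructor
    · intro i j hij
      have h1 := h j i
      have h2 := ht hij
      omega
    · intro i j hij
      have h1 := h i j
      have h2 := ht hij
      have h3 := hr i
      have h4 := hr j
      show t i - r i ≤ t j - r j
      omega
  · rintro ⟨h1, h2⟩ i j
    rcases le_total i j with hij | hij
    · have ha : t i - r i ≤ t j - r j := h2 hij
      have hb := ht hij
      have h3 := hr i
      have h4 := hr j
      omega
    · have ha := h1 hij
      have hb := ht hij
      omega

theorem stmt19 [FiniteDimensional K V] (f : V →ₗ[K] V) (hf : IsNilpotent f)
    {k : ℕ} (u : Fin k → V) (t : Fin k → ℕ) (ht : Monotone t) (hu : IsGenTuple f u t)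
    (r : Fin k → ℕ) (hr : ∀ i, r i ≤ t i) :
    Hinv f (⨆ i, cyc f ((f ^ r i) (u i))) ↔
      Monotone r ∧ Monotone (fun i => t i - r i) := by
  obtain ⟨hexp, hint⟩ := hu
  rw [← comb_iff t r ht hr]
  have hWspan := W_eq_span f hexp hint r
  constructor
  · -- Hinv → combinatorial condition
    intro hH i j
    set c := t j - t i with hc
    by_cases h0 : t j ≤ r i + c
    · exact le_trans (hr j) h0
    push_neg at h0
    have hri : r i < t i := by
      have := hr i
      omega
    -- the endomorphism sending `u i` to `f^c (u j)` and all other generators to `0`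
    set g := (genBasis f hexp hint).constr K
      (fun p : (l : Fin k) × Fin (t l) =>
        if p.1 = i then (f ^ ((p.2 : ℕ) + c)) (u j) else 0) with hg
    have hgB : ∀ q : (l : Fin k) × Fin (t l), g (genBasis f hexp hint q)
        = if q.1 = i then (f ^ ((q.2 : ℕ) + c)) (u j) else 0 := by
      intro q
      rw [hg, Module.Basis.constr_basis]
    have hcomm : g ∘ₗ f = f ∘ₗ g := by
      refine (genBasis f hexp hint).ext fun p => ?_
      simp only [LinearMap.comp_apply]
      rw [show f (genBasis f hexp hint p) = (f ^ ((p.2 : ℕ) + 1)) (u p.1) from by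
        rw [genBasis_apply, apply_pow_apply]]
      rw [hgB p]
      by_cases hm : (p.2 : ℕ) + 1 < t p.1
      · rw [show (f ^ ((p.2 : ℕ) + 1)) (u p.1)
            = genBasis f hexp hint ⟨p.1, ⟨(p.2 : ℕ) + 1, hm⟩⟩ from by rw [genBasis_apply]]
        rw [hgB ⟨p.1, ⟨(p.2 : ℕ) + 1, hm⟩⟩]
        by_cases hpi : p.1 = i
        · simp only [hpi, if_true]
          rw [apply_pow_apply]
          rw [show (p.2 : ℕ) + 1 + c = (p.2 : ℕ) + c + 1 from by omega]
        · simp only [hpi, if_false, map_zero]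
      · rw [show (f ^ ((p.2 : ℕ) + 1)) (u p.1) = 0 from
          pow_apply_eq_zero f (hexp p.1).1 (by omega), map_zero]
        by_cases hpi : p.1 = i
        · simp only [hpi, if_true]
          rw [apply_pow_apply]
          have hti : t p.1 = t i := congrArg t hpi
          have h2 : (p.2 : ℕ) < t p.1 := p.2.isLt
          refine (pow_apply_eq_zero f (hexp j).1 ?_).symm
          omega
        · simp only [hpi, if_false, map_zero]
    have hmem : (f ^ r i) (u i) ∈ (⨆ i, cyc f ((f ^ r i) (u i))) :=
      le_iSup (fun i => cyc f ((f ^ r i) (u i))) i (self_mem_cyc f _)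
    have hgmem : g ((f ^ r i) (u i)) ∈ (⨆ i, cyc f ((f ^ r i) (u i))) :=
      hH g hcomm ⟨_, hmem, rfl⟩
    have hgeq : g ((f ^ r i) (u i)) = (f ^ (r i + c)) (u j) := by
      have hb : (f ^ r i) (u i) = genBasis f hexp hint ⟨i, ⟨r i, hri⟩⟩ := by
        rw [genBasis_apply]
      rw [hb, hgB ⟨i, ⟨r i, hri⟩⟩]
      simp
    rw [hgeq] at hgmem
    have hb2 : (f ^ (r i + c)) (u j) = genBasis f hexp hint ⟨j, ⟨r i + c, h0⟩⟩ := by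
      rw [genBasis_apply]
    rw [hb2, hWspan] at hgmem
    have := (genBasis f hexp hint).self_mem_span_image.1 hgmem
    simpa using this
  · -- combinatorial condition → Hinv
    intro hcond g hg
    have hc : Commute f g := by
      show f * g = g * f
      rw [Module.End.mul_eq_comp, Module.End.mul_eq_comp, hg]
    have hgpow : ∀ (n : ℕ) (y : V), g ((f ^ n) y) = (f ^ n) (g y) := by
      intro n y
      have := hc.pow_left n
      calc g ((f ^ n) y) = (g * f ^ n) y := rfl
        _ = (f ^ n * g) y := by rw [this]
        _ = (f ^ n) (g y) := rfl
    rw [hWspan, Submodule.map_span, Submodule.span_le]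
    rintro _ ⟨_, ⟨p, hp, rfl⟩, rfl⟩
    simp only [Set.mem_setOf_eq] at hp
    show g (genBasis f hexp hint p) ∈ _
    rw [genBasis_apply, hgpow]
    obtain ⟨w, hw, hwsum⟩ := exists_decomp_s19 f hexp hint (g (u p.1))
    have hker : ∀ l', (f ^ (t p.1)) (w l') = 0 := by
      refine components_eq_zero f hexp hint _
        (fun l' => pow_apply_mem_cyc f (hw l') _) ?_
      rw [← map_sum, hwsum, ← hgpow, (hexp p.1).1, map_zero]
    have hw2 : ∀ l', w l' ∈ cyc f ((f ^ (t l' - t p.1)) (u l')) :=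
      fun l' => mem_cyc_pow_of_pow_eq_zero f (hexp l') (hw l') (hker l')
    rw [← hwsum, map_sum]
    rw [← hWspan]
    refine Submodule.sum_mem _ fun l' _ => ?_
    have h3 : (f ^ (p.2 : ℕ)) (w l') ∈ cyc f ((f ^ ((t l' - t p.1) + (p.2 : ℕ))) (u l')) :=
      pow_apply_mem_cyc_pow f (hw2 l') _
    have h4 : cyc f ((f ^ ((t l' - t p.1) + (p.2 : ℕ))) (u l')) ≤ cyc f ((f ^ r l') (u l')) := by
      refine cyc_pow_le_cyc_pow f (u l') ?_
      have := hcond p.1 l'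
      omega
    exact le_iSup (fun i => cyc f ((f ^ r i) (u i))) l' (h4 h3)
end
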